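/- Let n ≥ 1 and let g ∈ ℂ[[x₁,…,xₙ]] be a multivariate formal power series over ℂ. Suppose g is algebraic over the subring of convergent power series: there exist d ≥ 1 and formal power series f₀, f₁, …, f_d ∈ ℂ[[x₁,…,xₙ]], not all zero, each of which is convergent, such that f₀·g^d + f₁·g^{d-1} + ⋯ + f_d = 0 in ℂ[[x₁,…,xₙ]]. Then g is itself convergent. Equivalently, the intersection of the algebraic closure of ℂ{x₁,…,xₙ} with ℂ[[x₁,…,xₙ]], taken inside the algebraic closure of the fraction field of ℂ[[x₁,…,xₙ]], equals ℂ{x₁,…,xₙ}. -/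

import Mathlib

open MvPowerSeries Finset

/-- A multivariate formal power series `f ∈ ℂ[[x₁,…,xₙ]]` is *convergent* if there
exist `C > 0` and `R > 0` with `|coeff_m f| ≤ C·R^{|m|}` for every multi-index `m`,
where `|m| = Σᵢ mᵢ`. -/
def IsConvergent {n : ℕ} (f : MvPowerSeries (Fin n) ℂ) : Prop :=
  ∃ C : ℝ, 0 < C ∧ ∃ R : ℝ, 0 < R ∧
    ∀ m : Fin n →₀ ℕ,
      ‖MvPowerSeries.coeff m f‖ ≤ C * R ^ (m.sum fun _ k => k)

namespace AlgConv
variable {n : ℕ}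

/-- weighted degree -/
def wdeg (w : Fin n → ℕ) (β : Fin n →₀ ℕ) : ℕ := ∑ i, β i * w i

def deg (β : Fin n →₀ ℕ) : ℕ := ∑ i, β i

lemma wdeg_add (w : Fin n → ℕ) (β γ : Fin n →₀ ℕ) :
    wdeg w (β + γ) = wdeg w β + wdeg w γ := by
  simp [wdeg, add_mul, Finset.sum_add_distrib]

lemma deg_eq_sum (β : Fin n →₀ ℕ) : (β.sum fun _ k => k) = deg β := by
  rw [deg, Finsupp.sum_fintype] ; simp

lemma single_le_deg (β : Fin n →₀ ℕ) (i : Fin n) : β i ≤ deg β :=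
  Finset.single_le_sum (fun _ _ => Nat.zero_le _) (mem_univ i)

lemma deg_le_wdeg {w : Fin n → ℕ} (hw : ∀ i, 1 ≤ w i) (β : Fin n →₀ ℕ) :
    deg β ≤ wdeg w β :=
  Finset.sum_le_sum fun i _ => le_mul_of_one_le_right (Nat.zero_le _) (hw i)

lemma wdeg_le_sum_mul (w : Fin n → ℕ) (β : Fin n →₀ ℕ) :
    wdeg w β ≤ (∑ i, w i) * deg β := by
  rw [Finset.sum_mul]
  exact Finset.sum_le_sum fun i _ => by
    calc β i * w i ≤ deg β * w i := Nat.mul_le_mul_right _ (single_le_deg β i)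
    _ = w i * deg β := Nat.mul_comm _ _

/-- the finite set of multi-indices of weighted degree `k` -/
noncomputable def T (w : Fin n → ℕ) (k : ℕ) : Finset (Fin n →₀ ℕ) := by
  classical
  exact ((univ : Finset (Fin n → Fin (k+1))).image
    (fun φ => Finsupp.equivFunOnFinite.symm fun i => ((φ i : ℕ)))).filter
    (fun β => wdeg w β = k)

lemma mem_T {w : Fin n → ℕ} (hw : ∀ i, 1 ≤ w i) {k : ℕ} {β : Fin n →₀ ℕ} :
    β ∈ T w k ↔ wdeg w β = k := by
  classical
  constructor
  · intro hb; exact (Finset.mem_filter.mp hb).2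
  · intro hb
    refine Finset.mem_filter.mpr ⟨Finset.mem_image.mpr ?_, hb⟩
    have hβ : ∀ i, β i < k + 1 := by
      intro i
      have := (single_le_deg β i).trans ((deg_le_wdeg hw β).trans_eq hb)
      omega
    refine ⟨fun i => ⟨β i, hβ i⟩, mem_univ _, ?_⟩
    apply Finsupp.ext; intro i
    simp [Finsupp.equivFunOnFinite]

lemma card_T_le (w : Fin n → ℕ) (k : ℕ) : (T w k).card ≤ (k+1)^n := by
  classical
  calc (T w k).card ≤ _ := Finset.card_filter_le _ _
  _ ≤ (univ : Finset (Fin n → Fin (k+1))).card := Finset.card_image_le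
  _ = (k+1)^n := by simp

/-- sum of absolute values of coefficients in weighted degree k -/
noncomputable def nrm (w : Fin n → ℕ) (f : MvPowerSeries (Fin n) ℂ) (k : ℕ) : ℝ :=
  ∑ β ∈ T w k, ‖coeff β f‖

lemma nrm_nonneg (w : Fin n → ℕ) (f : MvPowerSeries (Fin n) ℂ) (k : ℕ) :
    0 ≤ nrm w f k := Finset.sum_nonneg fun _ _ => norm_nonneg _

lemma norm_coeff_le_nrm {w : Fin n → ℕ} (hw : ∀ i, 1 ≤ w i)
    (f : MvPowerSeries (Fin n) ℂ) (β : Fin n →₀ ℕ) :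
    ‖coeff β f‖ ≤ nrm w f (wdeg w β) := by
  unfold nrm
  exact Finset.single_le_sum (f := fun γ => ‖coeff γ f‖) (fun _ _ => norm_nonneg _)
    ((mem_T hw).mpr rfl)

lemma nrm_add_le (w : Fin n → ℕ) (f g : MvPowerSeries (Fin n) ℂ) (k : ℕ) :
    nrm w (f + g) k ≤ nrm w f k + nrm w g k := by
  unfold nrm
  rw [← Finset.sum_add_distrib]
  exact Finset.sum_le_sum fun β _ => by
    simpa using norm_add_le (coeff β f) (coeff β g)

lemma nrm_mono_coeff (w : Fin n → ℕ) {f g : MvPowerSeries (Fin n) ℂ}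
    (h : ∀ β, ‖coeff β f‖ ≤ ‖coeff β g‖) (k : ℕ) : nrm w f k ≤ nrm w g k :=
  Finset.sum_le_sum fun β _ => h β

lemma nrm_sum_le {ι : Type*} (w : Fin n → ℕ) (s : Finset ι)
    (F : ι → MvPowerSeries (Fin n) ℂ) (k : ℕ) :
    nrm w (∑ j ∈ s, F j) k ≤ ∑ j ∈ s, nrm w (F j) k := by
  classical
  induction s using Finset.induction with
  | empty => simp [nrm]
  | @insert a s' hx ih =>
    rw [Finset.sum_insert hx, Finset.sum_insert hx]
    exact (nrm_add_le _ _ _ _).trans (by linarith)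

lemma nrm_mul_le {w : Fin n → ℕ} (hw : ∀ i, 1 ≤ w i)
    (f g : MvPowerSeries (Fin n) ℂ) (k : ℕ) :
    nrm w (f * g) k ≤ ∑ i ∈ range (k+1), nrm w f i * nrm w g (k - i) := by
  classical
  have step1 : nrm w (f*g) k ≤
      ∑ β ∈ T w k, ∑ p ∈ Finset.HasAntidiagonal.antidiagonal β, ‖coeff p.1 f‖ * ‖coeff p.2 g‖ := by
    refine Finset.sum_le_sum fun β _ => ?_
    rw [MvPowerSeries.coeff_mul]
    exact (norm_sum_le _ _).trans (Finset.sum_le_sum fun p _ => norm_mul_le _ _)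
  refine step1.trans ?_
  rw [Finset.sum_sigma']
  have : ∀ i ∈ range (k+1), nrm w f i * nrm w g (k-i)
      = ∑ q ∈ T w i ×ˢ T w (k-i), ‖coeff q.1 f‖ * ‖coeff q.2 g‖ := by
    intro i _
    rw [Finset.sum_product]
    simp [nrm, Finset.sum_mul, Finset.mul_sum]
    rw [Finset.sum_comm]
  rw [Finset.sum_congr rfl this, Finset.sum_sigma']
  apply le_of_eq
  refine Finset.sum_nbij' (i := fun x => ⟨wdeg w x.2.1, (x.2.1, x.2.2)⟩)
    (j := fun y => ⟨y.2.1 + y.2.2, (y.2.1, y.2.2)⟩) ?_ ?_ ?_ ?_ ?_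
  · rintro ⟨β, p1, p2⟩ hx
    simp only [Finset.mem_sigma, Finset.HasAntidiagonal.mem_antidiagonal] at hx
    obtain ⟨hβ, hp⟩ := hx
    have hβ' := (mem_T hw).mp hβ
    have : wdeg w p1 + wdeg w p2 = k := by rw [← wdeg_add, hp, hβ']
    simp only [Finset.mem_sigma, Finset.mem_range, Finset.mem_product]
    refine ⟨by omega, (mem_T hw).mpr rfl, (mem_T hw).mpr (by omega)⟩
  · rintro ⟨i, q1, q2⟩ hy
    simp only [Finset.mem_sigma, Finset.mem_range, Finset.mem_product] at hy
    obtain ⟨hi, h1, h2⟩ := hy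
    have h1' := (mem_T hw).mp h1
    have h2' := (mem_T hw).mp h2
    simp only [Finset.mem_sigma, Finset.HasAntidiagonal.mem_antidiagonal]
    exact ⟨(mem_T hw).mpr (by rw [wdeg_add, h1', h2']; omega), trivial⟩
  · rintro ⟨β, p1, p2⟩ hx
    simp only [Finset.mem_sigma, Finset.HasAntidiagonal.mem_antidiagonal] at hx
    simp [hx.2]
  · rintro ⟨i, q1, q2⟩ hy
    simp only [Finset.mem_sigma, Finset.mem_range, Finset.mem_product] at hy
    have := (mem_T hw).mp hy.2.1
    simp [this]
  · rintro ⟨β, p1, p2⟩ _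
    rfl

lemma nrm_shift_le {w : Fin n → ℕ} (hw : ∀ i, 1 ≤ w i)
    (F : MvPowerSeries (Fin n) ℂ) (α : Fin n →₀ ℕ) (k : ℕ) :
    ∑ β ∈ T w k, ‖coeff (α + β) F‖ ≤ nrm w F (wdeg w α + k) := by
  classical
  have hinj : Set.InjOn (fun β => α + β) (T w k : Set (Fin n →₀ ℕ)) := by
    intro x _ y _ hxy; exact add_left_cancel hxy
  have himg : ∑ γ ∈ (T w k).image (fun β => α + β), ‖coeff γ F‖
      = ∑ β ∈ T w k, ‖coeff (α + β) F‖ :=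
    Finset.sum_image (fun x hx y hy => hinj hx hy)
  rw [← himg]
  apply Finset.sum_le_sum_of_subset_of_nonneg
  · intro γ hγ
    obtain ⟨β, hβ, rfl⟩ := Finset.mem_image.mp hγ
    exact (mem_T hw).mpr (by rw [wdeg_add, (mem_T hw).mp hβ])
  · intro _ _ _; exact norm_nonneg _

/-- coefficients vanish below weighted degree t -/
def Vw (w : Fin n → ℕ) (t : ℕ) (f : MvPowerSeries (Fin n) ℂ) : Prop :=
  ∀ β, wdeg w β < t → coeff β f = 0

lemma Vw_mono {w : Fin n → ℕ} {s t : ℕ} (h : t ≤ s) {f : MvPowerSeries (Fin n) ℂ}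
    (hf : Vw w s f) : Vw w t f := fun β hβ => hf β (lt_of_lt_of_le hβ h)

lemma Vw_zero (w : Fin n → ℕ) (t : ℕ) : Vw w t (0 : MvPowerSeries (Fin n) ℂ) := by
  intro β _; simp

lemma Vw_any (w : Fin n → ℕ) (f : MvPowerSeries (Fin n) ℂ) : Vw w 0 f :=
  fun β hβ => absurd hβ (Nat.not_lt_zero _)

lemma Vw_add {w : Fin n → ℕ} {t : ℕ} {f g : MvPowerSeries (Fin n) ℂ}
    (hf : Vw w t f) (hg : Vw w t g) : Vw w t (f + g) := by
  intro β hβ; simp [map_add, hf β hβ, hg β hβ]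

lemma Vw_neg {w : Fin n → ℕ} {t : ℕ} {f : MvPowerSeries (Fin n) ℂ}
    (hf : Vw w t f) : Vw w t (-f) := by
  intro β hβ; simp [hf β hβ]

lemma Vw_sub {w : Fin n → ℕ} {t : ℕ} {f g : MvPowerSeries (Fin n) ℂ}
    (hf : Vw w t f) (hg : Vw w t g) : Vw w t (f - g) := by
  rw [sub_eq_add_neg]; exact Vw_add hf (Vw_neg hg)

lemma Vw_mul {w : Fin n → ℕ} {s t : ℕ} {f g : MvPowerSeries (Fin n) ℂ}
    (hf : Vw w s f) (hg : Vw w t g) : Vw w (s + t) (f * g) := by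
  intro β hβ
  rw [MvPowerSeries.coeff_mul]
  refine Finset.sum_eq_zero fun p hp => ?_
  rw [Finset.HasAntidiagonal.mem_antidiagonal] at hp
  have hsum : wdeg w p.1 + wdeg w p.2 = wdeg w β := by rw [← wdeg_add, hp]
  rcases Nat.lt_or_ge (wdeg w p.1) s with h | h
  · rw [hf p.1 h, zero_mul]
  · rw [hg p.2 (by omega), mul_zero]

lemma Vw_pow {w : Fin n → ℕ} {t : ℕ} {f : MvPowerSeries (Fin n) ℂ}
    (hf : Vw w t f) (j : ℕ) : Vw w (j * t) (f ^ j) := by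
  induction j with
  | zero => simpa using Vw_any w 1
  | succ j ih =>
    have := Vw_mul ih hf
    rw [pow_succ]
    rwa [show (j+1) * t = j * t + t by ring]

lemma Vw_sum {ι : Type*} {w : Fin n → ℕ} {t : ℕ} (s : Finset ι)
    {F : ι → MvPowerSeries (Fin n) ℂ} (hF : ∀ j ∈ s, Vw w t (F j)) :
    Vw w t (∑ j ∈ s, F j) := by
  classical
  induction s using Finset.induction with
  | empty => simpa using Vw_zero w t
  | @insert a s' hx ih =>
    rw [Finset.sum_insert hx]
    exact Vw_add (hF a (Finset.mem_insert_self a s'))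
      (ih fun j hj => hF j (Finset.mem_insert_of_mem hj))

lemma Vw_nrm {w : Fin n → ℕ} (hw : ∀ i, 1 ≤ w i) {t : ℕ} {f : MvPowerSeries (Fin n) ℂ}
    (hf : Vw w t f) {k : ℕ} (hk : k < t) : nrm w f k = 0 := by
  unfold nrm
  refine Finset.sum_eq_zero fun β hβ => ?_
  rw [hf β (((mem_T hw).mp hβ) ▸ hk)]
  simp

lemma wdeg_one (β : Fin n →₀ ℕ) : wdeg (fun _ => 1) β = deg β := by
  simp [wdeg, deg]

lemma hw_one : ∀ i : Fin n, 1 ≤ (fun _ : Fin n => 1) i := fun _ => le_refl 1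

lemma nat_add_one_le_two_pow (k : ℕ) : (k + 1 : ℕ) ≤ 2 ^ k := (Nat.lt_two_pow_self (n := k))

lemma nrm_le_geom {w : Fin n → ℕ} (hw : ∀ i, 1 ≤ w i) {f : MvPowerSeries (Fin n) ℂ}
    (hf : IsConvergent f) :
    ∃ M ρ : ℝ, 1 ≤ M ∧ 1 ≤ ρ ∧ ∀ k, nrm w f k ≤ M * ρ ^ k := by
  obtain ⟨C, hC, R, hR, hb⟩ := hf
  set Rm := max R 1 with hRm
  refine ⟨max C 1, (2:ℝ)^n * Rm, le_max_right _ _, ?_, ?_⟩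
  · calc (1:ℝ) = 1 * 1 := by ring
    _ ≤ (2:ℝ)^n * Rm := by
        apply mul_le_mul (one_le_pow₀ one_le_two) (le_max_right _ _) zero_le_one
        positivity
  · intro k
    have hcoef : ∀ β ∈ T w k, ‖coeff β f‖ ≤ max C 1 * Rm ^ k := by
      intro β hβ
      have hdeg : deg β ≤ k := ((mem_T hw).mp hβ) ▸ deg_le_wdeg hw β
      calc ‖coeff β f‖ ≤ C * R ^ (β.sum fun _ k => k) := hb β
      _ = C * R ^ (deg β) := by rw [deg_eq_sum]
      _ ≤ max C 1 * Rm ^ k := by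
          apply mul_le_mul (le_max_left _ _) ?_ (by positivity) (by positivity)
          calc R ^ deg β ≤ Rm ^ deg β :=
              pow_le_pow_left₀ (le_of_lt hR) (le_max_left _ _) _
          _ ≤ Rm ^ k := pow_le_pow_right₀ (le_max_right _ _) hdeg
    calc nrm w f k ≤ ∑ _β ∈ T w k, max C 1 * Rm ^ k := Finset.sum_le_sum hcoef
    _ = (T w k).card * (max C 1 * Rm ^ k) := by rw [Finset.sum_const, nsmul_eq_mul]
    _ ≤ ((k+1:ℕ)^n : ℝ) * (max C 1 * Rm ^ k) := by
        apply mul_le_mul_of_nonneg_right _ (by positivity)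
        exact_mod_cast Nat.cast_le.mpr (card_T_le w k)
    _ ≤ ((2:ℝ)^n)^k * (max C 1 * Rm ^ k) := by
        apply mul_le_mul_of_nonneg_right _ (by positivity)
        have : ((k+1)^n : ℕ) ≤ ((2^n)^k : ℕ) := by
          calc (k+1)^n ≤ (2^k)^n := Nat.pow_le_pow_left ((Nat.lt_two_pow_self (n := k))) n
          _ = (2^n)^k := by rw [← pow_mul, ← pow_mul, Nat.mul_comm]
        exact_mod_cast this
    _ = max C 1 * ((2:ℝ)^n * Rm) ^ k := by rw [mul_pow]; ring

lemma isConvergent_of_nrm_le {w : Fin n → ℕ} (hw : ∀ i, 1 ≤ w i)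
    {f : MvPowerSeries (Fin n) ℂ} (C θ : ℝ) (hC : 0 < C) (hθ : 1 ≤ θ)
    (h : ∀ k, nrm w f k ≤ C * θ ^ k) : IsConvergent f := by
  refine ⟨C, hC, θ ^ (∑ i, w i), by positivity, fun β => ?_⟩
  calc ‖coeff β f‖ ≤ nrm w f (wdeg w β) := norm_coeff_le_nrm hw f β
  _ ≤ C * θ ^ (wdeg w β) := h _
  _ ≤ C * (θ ^ (∑ i, w i)) ^ (β.sum fun _ k => k) := by
      apply mul_le_mul_of_nonneg_left _ (le_of_lt hC)
      rw [← pow_mul, deg_eq_sum]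
      exact pow_le_pow_right₀ hθ (wdeg_le_sum_mul w β)

lemma conv_zero : IsConvergent (0 : MvPowerSeries (Fin n) ℂ) :=
  ⟨1, one_pos, 1, one_pos, fun β => by simp⟩

lemma conv_monomial (α : Fin n →₀ ℕ) (c : ℂ) :
    IsConvergent (MvPowerSeries.monomial α c) := by
  refine ⟨‖c‖ + 1, by positivity, 1, one_pos, fun β => by
    rw [MvPowerSeries.coeff_monomial]
    split <;> simp [norm_nonneg] <;> positivity⟩

lemma conv_add {f g : MvPowerSeries (Fin n) ℂ}
    (hf : IsConvergent f) (hg : IsConvergent g) : IsConvergent (f + g) := by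
  obtain ⟨C1, hC1, R1, hR1, h1⟩ := hf
  obtain ⟨C2, hC2, R2, hR2, h2⟩ := hg
  refine ⟨C1 + C2, by positivity, max R1 R2, by positivity, fun β => ?_⟩
  calc ‖coeff β (f+g)‖ ≤ ‖coeff β f‖ + ‖coeff β g‖ := by
        rw [map_add]; exact norm_add_le _ _
  _ ≤ C1 * R1 ^ (β.sum fun _ k => k) + C2 * R2 ^ (β.sum fun _ k => k) :=
      add_le_add (h1 β) (h2 β)
  _ ≤ C1 * (max R1 R2) ^ (β.sum fun _ k => k) + C2 * (max R1 R2) ^ (β.sum fun _ k => k) := by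
      gcongr <;> first
        | exact le_of_lt hR1 | exact le_of_lt hR2
        | exact le_max_left _ _ | exact le_max_right _ _
  _ = (C1 + C2) * (max R1 R2) ^ (β.sum fun _ k => k) := by ring

lemma conv_nsmul {f : MvPowerSeries (Fin n) ℂ} (k : ℕ)
    (hf : IsConvergent f) : IsConvergent (k • f) := by
  obtain ⟨C, hC, R, hR, h⟩ := hf
  refine ⟨(k+1) * C, by positivity, R, hR, fun β => ?_⟩
  have hcoef : ‖coeff β (k • f)‖ = (k:ℝ) * ‖coeff β f‖ := by
    rw [map_nsmul, nsmul_eq_mul, norm_mul]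
    simp
  rw [hcoef, mul_assoc]
  apply mul_le_mul _ (h β) (by positivity) (by positivity)
  exact_mod_cast Nat.le_succ k

lemma conv_mul {f g : MvPowerSeries (Fin n) ℂ}
    (hf : IsConvergent f) (hg : IsConvergent g) : IsConvergent (f * g) := by
  obtain ⟨M1, ρ1, hM1, hρ1, h1⟩ := nrm_le_geom hw_one hf
  obtain ⟨M2, ρ2, hM2, hρ2, h2⟩ := nrm_le_geom hw_one hg
  set ρ := max ρ1 ρ2 with hρ
  have hρ1' : (1:ℝ) ≤ ρ := le_trans hρ1 (le_max_left _ _)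
  apply isConvergent_of_nrm_le hw_one (M1 * M2) (2 * ρ)
    (by positivity) (by linarith)
  intro k
  calc nrm (fun _ => 1) (f * g) k
      ≤ ∑ i ∈ range (k+1), nrm (fun _ => 1) f i * nrm (fun _ => 1) g (k - i) :=
        nrm_mul_le hw_one f g k
  _ ≤ ∑ i ∈ range (k+1), M1 * ρ1 ^ i * (M2 * ρ2 ^ (k - i)) :=
      Finset.sum_le_sum fun i _ => mul_le_mul (h1 i) (h2 (k-i))
        (nrm_nonneg _ _ _) (by positivity)
  _ ≤ ∑ _i ∈ range (k+1), M1 * M2 * ρ ^ k := by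
      refine Finset.sum_le_sum fun i hi => ?_
      have hik : i ≤ k := by simpa using Nat.lt_succ_iff.mp (Finset.mem_range.mp hi)
      have e1 : ρ1 ^ i ≤ ρ ^ i := pow_le_pow_left₀ (by linarith) (le_max_left _ _) _
      have e2 : ρ2 ^ (k-i) ≤ ρ ^ (k-i) := pow_le_pow_left₀ (by linarith) (le_max_right _ _) _
      calc M1 * ρ1 ^ i * (M2 * ρ2 ^ (k - i)) ≤ M1 * ρ ^ i * (M2 * ρ ^ (k - i)) := by
            gcongr
      _ = M1 * M2 * (ρ ^ i * ρ ^ (k-i)) := by ring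
      _ = M1 * M2 * ρ ^ k := by rw [← pow_add, Nat.add_sub_cancel' hik]
  _ = (k+1 : ℕ) * (M1 * M2 * ρ ^ k) := by rw [Finset.sum_const, nsmul_eq_mul, Finset.card_range]
  _ ≤ (2:ℝ)^k * (M1 * M2 * ρ ^ k) := by
      apply mul_le_mul_of_nonneg_right _ (by positivity)
      exact_mod_cast (Nat.lt_two_pow_self (n := k))
  _ = M1 * M2 * (2 * ρ) ^ k := by rw [mul_pow]; ring

lemma conv_one : IsConvergent (1 : MvPowerSeries (Fin n) ℂ) := by
  refine ⟨2, by norm_num, 1, one_pos, fun β => ?_⟩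
  rw [MvPowerSeries.coeff_one]
  split <;> simp

lemma conv_pow {f : MvPowerSeries (Fin n) ℂ} (hf : IsConvergent f) (j : ℕ) :
    IsConvergent (f ^ j) := by
  induction j with
  | zero => simpa using conv_one
  | succ j ih => rw [pow_succ]; exact conv_mul ih hf

lemma conv_sum {ι : Type*} (s : Finset ι) {F : ι → MvPowerSeries (Fin n) ℂ}
    (hF : ∀ j ∈ s, IsConvergent (F j)) : IsConvergent (∑ j ∈ s, F j) := by
  classical
  induction s using Finset.induction with
  | empty => simpa using conv_zero
  | @insert a s' hx ih =>
    rw [Finset.sum_insert hx]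
    exact conv_add (hF a (Finset.mem_insert_self a s'))
      (ih fun j hj => hF j (Finset.mem_insert_of_mem hj))



noncomputable def om (k : ℕ) : ℝ := (((k:ℝ)+1)^2)⁻¹

lemma om_pos (k : ℕ) : 0 < om k := by rw [om]; positivity

lemma om_le_one (k : ℕ) : om k ≤ 1 := by
  rw [om]
  rw [inv_le_one_iff₀]
  right
  nlinarith [Nat.cast_nonneg (α := ℝ) k]

lemma om_anti {k l : ℕ} (h : k ≤ l) : om l ≤ om k := by
  have h' : ((k:ℝ)+1)^2 ≤ ((l:ℝ)+1)^2 := by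
    have : (k:ℝ) ≤ l := by exact_mod_cast h
    nlinarith [Nat.cast_nonneg (α := ℝ) k]
  rw [om, om]
  exact inv_anti₀ (by positivity) h'

lemma om_le_4om {p k : ℕ} (h : k + 1 ≤ 2 * (p + 1)) : om p ≤ 4 * om k := by
  have h1 : ((k:ℝ)+1) ≤ 2*((p:ℝ)+1) := by exact_mod_cast h
  have h2 : ((k:ℝ)+1)^2 / 4 ≤ ((p:ℝ)+1)^2 := by nlinarith [Nat.cast_nonneg (α := ℝ) k]
  calc om p = (((p:ℝ)+1)^2)⁻¹ := rfl
  _ ≤ (((k:ℝ)+1)^2 / 4)⁻¹ := inv_anti₀ (by positivity) h2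
  _ = 4 * om k := by rw [om, inv_div, div_eq_mul_inv]

lemma om_ratio {t k : ℕ} (h : t ≤ k) : om (k - t) ≤ ((t:ℝ)+1)^2 * om k := by
  have hnat : k + 1 ≤ (t+1) * ((k-t)+1) := by
    have : (t+1) * ((k-t)+1) = t*(k-t) + t + (k-t) + 1 := by ring
    omega
  have h1 : ((k:ℝ)+1) ≤ ((t:ℝ)+1) * (((k-t:ℕ):ℝ)+1) := by exact_mod_cast hnat
  have h2 : ((k:ℝ)+1)^2 / ((t:ℝ)+1)^2 ≤ (((k-t:ℕ):ℝ)+1)^2 := by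
    rw [div_le_iff₀ (by positivity)]
    nlinarith [Nat.cast_nonneg (α := ℝ) k, Nat.cast_nonneg (α := ℝ) t,
      Nat.cast_nonneg (α := ℝ) (k-t)]
  calc om (k-t) = ((((k-t:ℕ):ℝ)+1)^2)⁻¹ := rfl
  _ ≤ (((k:ℝ)+1)^2 / ((t:ℝ)+1)^2)⁻¹ := inv_anti₀ (by positivity) h2
  _ = ((t:ℝ)+1)^2 * om k := by rw [om, inv_div, div_eq_mul_inv]

lemma nat_sq_le : ∀ t : ℕ, (t+1)^2 ≤ 4 * 2^t := by
  have haux : ∀ t : ℕ, 2*t + 3 ≤ 4 * 2^t := by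
    intro t; induction t with
    | zero => norm_num
    | succ t ih =>
      have : 2^t ≥ 1 := Nat.one_le_two_pow
      calc 2*(t+1)+3 = (2*t+3) + 2 := by ring
      _ ≤ 4*2^t + 4*2^t := by omega
      _ = 4*2^(t+1) := by ring
  intro t; induction t with
  | zero => norm_num
  | succ t ih =>
    calc (t+2)^2 = (t+1)^2 + (2*t+3) := by ring
    _ ≤ 4*2^t + 4*2^t := Nat.add_le_add ih (haux t)
    _ = 4*2^(t+1) := by ring

lemma sq_le_two_pow (t : ℕ) : ((t:ℝ)+1)^2 ≤ 4 * 2^t := by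
  exact_mod_cast nat_sq_le t

lemma pt_bound {x : ℝ} (h0 : 0 ≤ x) (h4 : x ≤ 1/4) (t : ℕ) :
    x^t * ((t:ℝ)+1)^2 ≤ 4 := by
  have h1 : x^t ≤ (1/4:ℝ)^t := pow_le_pow_left₀ h0 h4 t
  have h2 : ((t:ℝ)+1)^2 ≤ 4*2^t := sq_le_two_pow t
  have h3 : (0:ℝ) ≤ (1/4:ℝ)^t := by positivity
  calc x^t * ((t:ℝ)+1)^2 ≤ (1/4:ℝ)^t * (4*2^t) := by
        apply mul_le_mul h1 h2 (by positivity) h3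
  _ = 4 * (2/4:ℝ)^t := by rw [div_pow, div_pow, mul_comm]; ring
  _ ≤ 4 * 1 := by
      apply mul_le_mul_of_nonneg_left _ (by norm_num)
      apply pow_le_one₀ <;> norm_num
  _ = 4 := by ring

lemma sum_geom_half (S : ℕ) : ∑ t ∈ range S, ((1:ℝ)/2)^t ≤ 2 := by
  rcases Nat.eq_zero_or_pos S with rfl | hS
  · simp
  rw [geom_sum_eq (by norm_num)]
  have : (0:ℝ) ≤ (1/2)^S := by positivity
  have h2 : ((1:ℝ)/2)^S ≤ 1 := by apply pow_le_one₀ <;> norm_num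
  rw [div_le_iff_of_neg (by norm_num)]
  linarith

lemma sum_sq_geom {x : ℝ} (h0 : 0 ≤ x) (h4 : x ≤ 1/4) (S : ℕ) :
    ∑ t ∈ range S, x^t * ((t:ℝ)+1)^2 ≤ 8 := by
  have step : ∀ t : ℕ, x^t * ((t:ℝ)+1)^2 ≤ 4 * (1/2:ℝ)^t := by
    intro t
    have h1 : x^t * ((t:ℝ)+1)^2 ≤ x^t * (4*2^t) :=
      mul_le_mul_of_nonneg_left (sq_le_two_pow t) (by positivity)
    have h2 : x^t * (2:ℝ)^t ≤ (1/4:ℝ)^t * 2^t :=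
      mul_le_mul_of_nonneg_right (pow_le_pow_left₀ h0 h4 t) (by positivity)
    have h3 : (1/4:ℝ)^t * 2^t = (1/2:ℝ)^t := by
      rw [← mul_pow]; norm_num
    calc x^t * ((t:ℝ)+1)^2 ≤ x^t * (4*2^t) := h1
    _ = 4 * (x^t * 2^t) := by ring
    _ ≤ 4 * ((1/4:ℝ)^t * 2^t) := by linarith
    _ = 4 * (1/2:ℝ)^t := by rw [h3]
  calc ∑ t ∈ range S, x^t * ((t:ℝ)+1)^2 ≤ ∑ t ∈ range S, 4 * (1/2:ℝ)^t :=
      Finset.sum_le_sum fun t _ => step t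
  _ = 4 * ∑ t ∈ range S, (1/2:ℝ)^t := by rw [Finset.mul_sum]
  _ ≤ 4 * 2 := by
      apply mul_le_mul_of_nonneg_left (sum_geom_half S) (by norm_num)
  _ = 8 := by norm_num

lemma sum_sq_geom_Ico {x : ℝ} (h0 : 0 ≤ x) (h4 : x ≤ 1/4) (S : ℕ) :
    ∑ t ∈ Ico 1 S, x^t * ((t:ℝ)+1)^2 ≤ 32 * x := by
  rw [Finset.sum_Ico_eq_sum_range]
  have step : ∀ s : ℕ, x^(1+s) * (((1+s:ℕ):ℝ)+1)^2 ≤ x * (4 * (x^s * ((s:ℝ)+1)^2)) := by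
    intro s
    have hc : (((1+s:ℕ):ℝ)+1)^2 ≤ 4*((s:ℝ)+1)^2 := by
      push_cast
      nlinarith [Nat.cast_nonneg (α := ℝ) s]
    have hp : x^(1+s) = x * x^s := by rw [pow_add, pow_one]
    rw [hp]
    calc x * x^s * (((1+s:ℕ):ℝ)+1)^2 ≤ x * x^s * (4*((s:ℝ)+1)^2) := by
          apply mul_le_mul_of_nonneg_left hc (by positivity)
    _ = x * (4 * (x^s * ((s:ℝ)+1)^2)) := by ring
  calc ∑ s ∈ range (S-1), x^(1+s) * (((1+s:ℕ):ℝ)+1)^2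
      ≤ ∑ s ∈ range (S-1), x * (4 * (x^s * ((s:ℝ)+1)^2)) :=
      Finset.sum_le_sum fun s _ => step s
  _ = x * 4 * ∑ s ∈ range (S-1), x^s * ((s:ℝ)+1)^2 := by
      rw [Finset.mul_sum]; apply Finset.sum_congr rfl; intros; ring
  _ ≤ x * 4 * 8 := by
      apply mul_le_mul_of_nonneg_left (sum_sq_geom h0 h4 _) (by positivity)
  _ = 32 * x := by ring

lemma sum_sq_geom_shift {x : ℝ} (h0 : 0 ≤ x) (h4 : x ≤ 1/4) (S : ℕ) :
    ∑ t ∈ range S, x^(t+1) * ((t:ℝ)+2)^2 ≤ 32 * x := by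
  have step : ∀ t : ℕ, x^(t+1) * ((t:ℝ)+2)^2 ≤ x * (4 * (x^t * ((t:ℝ)+1)^2)) := by
    intro t
    have hc : ((t:ℝ)+2)^2 ≤ 4*((t:ℝ)+1)^2 := by
      nlinarith [Nat.cast_nonneg (α := ℝ) t]
    have hp : x^(t+1) = x * x^t := by rw [pow_succ]; ring
    rw [hp]
    calc x * x^t * ((t:ℝ)+2)^2 ≤ x * x^t * (4*((t:ℝ)+1)^2) :=
        mul_le_mul_of_nonneg_left hc (by positivity)
    _ = x * (4 * (x^t * ((t:ℝ)+1)^2)) := by ring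
  calc ∑ t ∈ range S, x^(t+1) * ((t:ℝ)+2)^2
      ≤ ∑ t ∈ range S, x * (4 * (x^t * ((t:ℝ)+1)^2)) := Finset.sum_le_sum fun t _ => step t
  _ = x * 4 * ∑ t ∈ range S, x^t * ((t:ℝ)+1)^2 := by
      rw [Finset.mul_sum]; apply Finset.sum_congr rfl; intros; ring
  _ ≤ x * 4 * 8 := mul_le_mul_of_nonneg_left (sum_sq_geom h0 h4 _) (by positivity)
  _ = 32 * x := by ring

lemma sum_om_le (S : ℕ) : ∑ i ∈ range S, om i ≤ 2 := by
  have step : ∀ i : ℕ, om i ≤ 2/((i:ℝ)+1) - 2/((i:ℝ)+2) := by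
    intro i
    have h1 : (0:ℝ) < (i:ℝ)+1 := by positivity
    have h2 : (0:ℝ) < (i:ℝ)+2 := by positivity
    rw [om, div_sub_div _ _ (ne_of_gt h1) (ne_of_gt h2)]
    rw [inv_eq_one_div, div_le_div_iff₀ (by positivity) (by positivity)]
    ring_nf
    nlinarith [Nat.cast_nonneg (α := ℝ) i]
  calc ∑ i ∈ range S, om i ≤ ∑ i ∈ range S, (2/((i:ℝ)+1) - 2/((i:ℝ)+2)) :=
      Finset.sum_le_sum fun i _ => step i
  _ = ∑ i ∈ range S, ((fun i : ℕ => 2/((i:ℝ)+1)) i - (fun i : ℕ => 2/((i:ℝ)+1)) (i+1)) := by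
      apply Finset.sum_congr rfl
      intro i _
      push_cast
      ring
  _ = 2/(((0:ℕ):ℝ)+1) - 2/(((S:ℕ):ℝ)+1) := Finset.sum_range_sub' _ S
  _ ≤ 2 := by
      have : (0:ℝ) ≤ 2/(((S:ℕ):ℝ)+1) := by positivity
      norm_num
      linarith

lemma om_subconv (k : ℕ) : ∑ i ∈ range (k+1), om i * om (k-i) ≤ 16 * om k := by
  have term : ∀ i ∈ range (k+1), om i * om (k-i) ≤ 4 * om k * (om i + om (k-i)) := by
    intro i hi
    have hik : i ≤ k := Nat.lt_succ_iff.mp (Finset.mem_range.mp hi)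
    rcases le_total i (k-i) with h | h
    · have h4 : om (k-i) ≤ 4 * om k := om_le_4om (by omega)
      calc om i * om (k-i) ≤ om i * (4 * om k) :=
          mul_le_mul_of_nonneg_left h4 (le_of_lt (om_pos i))
      _ = 4 * om k * om i := by ring
      _ ≤ 4 * om k * (om i + om (k-i)) := by
          apply mul_le_mul_of_nonneg_left _ (by linarith [om_pos k])
          linarith [om_pos (k-i)]
    · have h4 : om i ≤ 4 * om k := om_le_4om (by omega)
      calc om i * om (k-i) ≤ (4 * om k) * om (k-i) :=
          mul_le_mul_of_nonneg_right h4 (le_of_lt (om_pos (k-i)))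
      _ ≤ 4 * om k * (om i + om (k-i)) := by
          apply mul_le_mul_of_nonneg_left _ (by linarith [om_pos k])
          linarith [om_pos i]
  calc ∑ i ∈ range (k+1), om i * om (k-i)
      ≤ ∑ i ∈ range (k+1), 4 * om k * (om i + om (k-i)) := Finset.sum_le_sum term
  _ = 4 * om k * ∑ i ∈ range (k+1), (om i + om (k-i)) := by
      rw [Finset.mul_sum]
  _ = 4 * om k * (∑ i ∈ range (k+1), om i + ∑ i ∈ range (k+1), om (k-i)) := by
      rw [Finset.sum_add_distrib]
  _ ≤ 4 * om k * (2 + 2) := by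
      apply mul_le_mul_of_nonneg_left _ (by linarith [om_pos k])
      have hrefl : ∑ i ∈ range (k+1), om (k - i) ≤ 2 := by
        have h := Finset.sum_range_reflect om (k+1)
        simp only [Nat.add_sub_cancel] at h
        rw [h]
        exact sum_om_le _
      exact add_le_add (sum_om_le _) hrefl
  _ = 16 * om k := by ring


lemma digits_inj (D : ℕ) (hD : 2 ≤ D) : ∀ (N : ℕ) (γ γ' : Fin N → ℕ),
    (∀ i, γ i < D) → (∀ i, γ' i < D) →
    (∑ i, γ i * D^(i:ℕ)) = (∑ i, γ' i * D^(i:ℕ)) → γ = γ' := by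
  intro N
  induction N with
  | zero => intro γ γ' _ _ _; funext i; exact absurd i.2 (by omega)
  | succ N ih =>
    intro γ γ' hγ hγ' hsum
    have expand : ∀ δ : Fin (N+1) → ℕ,
        (∑ i, δ i * D^(i:ℕ)) = δ 0 + D * ∑ i : Fin N, δ i.succ * D^(i:ℕ) := by
      intro δ
      rw [Fin.sum_univ_succ]
      congr 1
      · simp
      · rw [Finset.mul_sum]
        apply Finset.sum_congr rfl
        intro i _
        rw [Fin.val_succ, pow_succ]
        ring
    rw [expand γ, expand γ'] at hsum
    have h0 : γ 0 = γ' 0 := by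
      have e1 : (γ 0 + D * ∑ i : Fin N, γ i.succ * D^(i:ℕ)) % D = γ 0 % D :=
        Nat.add_mul_mod_self_left _ _ _
      have e2 : (γ' 0 + D * ∑ i : Fin N, γ' i.succ * D^(i:ℕ)) % D = γ' 0 % D :=
        Nat.add_mul_mod_self_left _ _ _
      rw [Nat.mod_eq_of_lt (hγ 0)] at e1
      rw [Nat.mod_eq_of_lt (hγ' 0)] at e2
      rw [← e1, hsum, e2]
    have htail : (fun i : Fin N => γ i.succ) = (fun i : Fin N => γ' i.succ) := by
      apply ih _ _ (fun i => hγ i.succ) (fun i => hγ' i.succ)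
      have : D * (∑ i : Fin N, γ i.succ * D^(i:ℕ)) = D * ∑ i : Fin N, γ' i.succ * D^(i:ℕ) := by
        omega
      exact Nat.eq_of_mul_eq_mul_left (by omega) this
    funext i
    rcases Fin.eq_zero_or_eq_succ i with rfl | ⟨j, rfl⟩
    · exact h0
    · exact congrFun htail j

section weights
variable (m : ℕ)

/-- weights separating the minimal-degree part -/
def wt (m : ℕ) (i : Fin n) : ℕ := (m+2)^(n+1) + (m+2)^((i:ℕ)+1)

lemma wt_ge_one (i : Fin n) : 1 ≤ wt m i :=
  le_trans (Nat.one_le_pow _ _ (by omega)) (Nat.le_add_right _ _)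

lemma wdeg_wt_eq (β : Fin n →₀ ℕ) :
    wdeg (wt m) β = (m+2)^(n+1) * deg β + (m+2) * ∑ i, β i * (m+2)^(i:ℕ) := by
  unfold wdeg wt deg
  rw [Finset.mul_sum, Finset.mul_sum, ← Finset.sum_add_distrib]
  apply Finset.sum_congr rfl
  intro i _
  rw [pow_succ']
  ring

lemma wdeg_wt_ge (β : Fin n →₀ ℕ) : (m+2)^(n+1) * deg β ≤ wdeg (wt m) β := by
  rw [wdeg_wt_eq]; omega

lemma wdeg_wt_le (β : Fin n →₀ ℕ) :
    wdeg (wt m) β ≤ (m+2)^(n+1) * deg β + (m+2)^n * deg β := by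
  rw [wdeg_wt_eq]
  have : (m+2) * ∑ i, β i * (m+2)^(i:ℕ) ≤ (m+2)^n * deg β := by
    have step : ∀ i : Fin n, β i * (m+2)^(i:ℕ) ≤ β i * (m+2)^(n-1) := by
      intro i
      exact Nat.mul_le_mul_left _ (Nat.pow_le_pow_right (by omega) (by omega))
    calc (m+2) * ∑ i, β i * (m+2)^(i:ℕ) ≤ (m+2) * ∑ i : Fin n, β i * (m+2)^(n-1) :=
        Nat.mul_le_mul_left _ (Finset.sum_le_sum fun i _ => step i)
    _ = (m+2) * ((m+2)^(n-1) * deg β) := by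
        rw [← Finset.sum_mul]; unfold deg; ring
    _ ≤ (m+2)^n * deg β := by
        rcases Nat.eq_zero_or_pos n with rfl | hn
        · simp [deg]
        · have : (m+2) * (m+2)^(n-1) = (m+2)^n := by
            rw [← pow_succ']
            congr 1
            omega
          rw [← mul_assoc, this]
  omega

lemma wdeg_wt_inj {β γ : Fin n →₀ ℕ} (hβ : deg β = m) (hγ : deg γ = m)
    (h : wdeg (wt m) β = wdeg (wt m) γ) : β = γ := by
  rw [wdeg_wt_eq, wdeg_wt_eq, hβ, hγ] at h
  have h2 : (∑ i, β i * (m+2)^(i:ℕ)) = ∑ i, γ i * (m+2)^(i:ℕ) := by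
    have := Nat.add_left_cancel h
    exact Nat.eq_of_mul_eq_mul_left (by omega) this
  have hfun := digits_inj (m+2) (by omega) n (fun i => β i) (fun i => γ i)
    (fun i => by have := single_le_deg β i; omega)
    (fun i => by have := single_le_deg γ i; omega) h2
  apply Finsupp.ext
  intro i
  exact congrFun hfun i

end weights

/-- The key coefficient identity: the leading monomial of `c 1` extracts
the coefficients of `r` from the relation. -/
lemma core_id {w : Fin n → ℕ}
    {e : ℕ} (he : 1 ≤ e)
    (c : ℕ → MvPowerSeries (Fin n) ℂ) (r r' : MvPowerSeries (Fin n) ℂ)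
    (α : Fin n →₀ ℕ) (cc : ℂ)
    {ν : ℕ} (hν : wdeg w α + 1 ≤ ν)
    (hrel : ∑ j ∈ Finset.range (e+1), c j * r ^ j = 0)
    (hVr : Vw w ν r) (hVr' : Vw w ν r')
    (hVc1 : Vw w (wdeg w α + 1) (c 1 - monomial α cc))
    (k : ℕ) (hsub : Vw w k (r - r'))
    (β : Fin n →₀ ℕ) (hβ : wdeg w β = k) :
    cc * coeff β r
      = - coeff (α + β) (c 0 + (c 1 - monomial α cc) * r'
          + ∑ j ∈ Finset.Ico 2 (e+1), c j * r'^j) := by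
  set a := wdeg w α with ha
  set c1' := c 1 - monomial α cc with hc1'
  set mon := monomial α cc with hmon
  have hsplit : range (e+1) = insert 0 (insert 1 (Ico 2 (e+1))) := by
    ext x
    simp only [Finset.mem_range, Finset.mem_insert, Finset.mem_Ico]
    omega
  have h0 : (0:MvPowerSeries (Fin n) ℂ)
      = c 0 + c 1 * r + ∑ j ∈ Ico 2 (e+1), c j * r^j := by
    rw [← hrel, hsplit]
    rw [Finset.sum_insert (by simp), Finset.sum_insert (by simp)]
    ring
  have hmoneq : mon * r
      = -(c 0 + c1' * r + ∑ j ∈ Ico 2 (e+1), c j * r^j) := by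
    have hc1e : c 1 = mon + c1' := by rw [hc1']; ring
    rw [hc1e] at h0
    linear_combination -h0
  -- replace r by r' in the higher-order part
  have hgeom : ∀ j ∈ Ico 2 (e+1),
      Vw w (k + a + 1) (c j * (r^j - r'^j)) := by
    intro j hj
    rw [Finset.mem_Ico] at hj
    have hfac : r^j - r'^j = (∑ i ∈ range j, r^i * r'^(j-1-i)) * (r - r') :=
      (geom_sum₂_mul r r' j).symm
    rw [hfac]
    have hgs : Vw w ((j-1) * ν) (∑ i ∈ range j, r^i * r'^(j-1-i)) := by
      apply Vw_sum
      intro i hi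
      rw [Finset.mem_range] at hi
      have := Vw_mul (Vw_pow hVr i) (Vw_pow hVr' (j-1-i))
      apply Vw_mono _ this
      rw [← Nat.add_mul]
      apply Nat.mul_le_mul_right
      omega
    have := Vw_mul (Vw_any w (c j)) (Vw_mul hgs hsub)
    apply Vw_mono _ this
    have h1 : ν ≤ (j-1) * ν := by
      calc ν = 1 * ν := (one_mul ν).symm
      _ ≤ (j-1) * ν := Nat.mul_le_mul_right _ (by omega)
    omega
  have hlin : Vw w (k + a + 1) (c1' * (r - r')) := by
    have := Vw_mul hVc1 hsub
    apply Vw_mono _ this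
    omega
  have hdiffV : Vw w (k + a + 1)
      ((c1' * r + ∑ j ∈ Ico 2 (e+1), c j * r^j)
        - (c1' * r' + ∑ j ∈ Ico 2 (e+1), c j * r'^j)) := by
    have hsums : (∑ j ∈ Ico 2 (e+1), c j * r^j) - ∑ j ∈ Ico 2 (e+1), c j * r'^j
        = ∑ j ∈ Ico 2 (e+1), c j * (r^j - r'^j) := by
      rw [← Finset.sum_sub_distrib]
      exact Finset.sum_congr rfl fun j _ => (mul_sub _ _ _).symm
    have hexp : (c1' * r + ∑ j ∈ Ico 2 (e+1), c j * r^j)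
        - (c1' * r' + ∑ j ∈ Ico 2 (e+1), c j * r'^j)
        = c1' * (r - r') + ∑ j ∈ Ico 2 (e+1), c j * (r^j - r'^j) := by
      rw [← hsums]
      ring
    rw [hexp]
    exact Vw_add hlin (Vw_sum _ hgeom)
  have hwαβ : wdeg w (α + β) = a + k := by rw [wdeg_add, hβ]
  have hzero : coeff (α + β)
      ((c1' * r + ∑ j ∈ Ico 2 (e+1), c j * r^j)
        - (c1' * r' + ∑ j ∈ Ico 2 (e+1), c j * r'^j)) = 0 :=
    hdiffV (α + β) (by omega)
  rw [map_sub, sub_eq_zero] at hzero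
  have hL : coeff (α + β) (mon * r) = cc * coeff β r :=
    MvPowerSeries.coeff_add_monomial_mul α β r cc
  have key : coeff (α + β) (c 0 + c1' * r + ∑ j ∈ Ico 2 (e+1), c j * r^j)
      = coeff (α + β) (c 0 + c1' * r' + ∑ j ∈ Ico 2 (e+1), c j * r'^j) := by
    rw [map_add, map_add] at hzero
    simp only [map_add]
    rw [add_assoc, add_assoc, hzero]
  calc cc * coeff β r = coeff (α + β) (mon * r) := hL.symm
  _ = coeff (α + β) (-(c 0 + c1' * r + ∑ j ∈ Ico 2 (e+1), c j * r^j)) := by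
      rw [hmoneq]
  _ = -(coeff (α + β) (c 0 + c1' * r + ∑ j ∈ Ico 2 (e+1), c j * r^j)) := by
      rw [map_neg]
  _ = - coeff (α + β) (c 0 + c1' * r' + ∑ j ∈ Ico 2 (e+1), c j * r'^j) := by
      rw [key]

lemma nrm_sub_le (w : Fin n → ℕ) (f g : MvPowerSeries (Fin n) ℂ) (k : ℕ) :
    nrm w (f - g) k ≤ nrm w f k + nrm w g k := by
  have : nrm w (-g) k = nrm w g k := by
    unfold nrm; apply Finset.sum_congr rfl; intro β _; rw [map_neg, norm_neg]
  rw [sub_eq_add_neg, ← this]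
  exact nrm_add_le w f (-g) k

lemma nrm_monomial_le (w : Fin n → ℕ) (α : Fin n →₀ ℕ) (cc : ℂ) (l : ℕ) :
    nrm w (monomial α cc) l ≤ ‖cc‖ := by
  classical
  unfold nrm
  calc ∑ β ∈ T w l, ‖coeff β (monomial α cc)‖
      = ∑ β ∈ T w l, (if β = α then ‖cc‖ else 0) := by
        apply Finset.sum_congr rfl; intro β _
        rw [MvPowerSeries.coeff_monomial]
        split <;> simp
  _ ≤ ‖cc‖ := by
      rw [Finset.sum_ite_eq' (T w l) α (fun _ => ‖cc‖)]
      split <;> simp [norm_nonneg]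

set_option maxHeartbeats 1600000 in
/-- The core analytic lemma: a formal solution of a polynomial equation whose
linear coefficient has an isolated minimal-weight monomial is convergent. -/
lemma core {w : Fin n → ℕ} (hw : ∀ i, 1 ≤ w i)
    {e : ℕ} (he : 1 ≤ e)
    (c : ℕ → MvPowerSeries (Fin n) ℂ) (r : MvPowerSeries (Fin n) ℂ)
    (α : Fin n →₀ ℕ) (cc : ℂ) (hcc : cc ≠ 0)
    {ν : ℕ} (hν : wdeg w α + 1 ≤ ν)
    (hrel : ∑ j ∈ Finset.range (e+1), c j * r ^ j = 0)
    (hVr : Vw w ν r)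
    (hVc1 : Vw w (wdeg w α + 1) (c 1 - monomial α cc))
    (M ρ : ℝ) (hM : 1 ≤ M) (hρ : 1 ≤ ρ)
    (hcb : ∀ j, j ≤ e → ∀ k, nrm w (c j) k ≤ M * ρ ^ k) :
    IsConvergent r := by
  classical
  set a := wdeg w α with ha
  have hccpos : (0:ℝ) < ‖cc‖ := norm_pos_iff.mpr hcc
  set M' : ℝ := M + ‖cc‖ with hM'def
  have hM'1 : 1 ≤ M' := by linarith
  have hM'0 : 0 < M' := by linarith
  set θ : ℝ := 1 + 4*ρ + 128*M'*ρ^(a+1)/‖cc‖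
      + 512*(e:ℝ)*M^2*16^e*ρ^(a+ν)*((ν:ℝ)+1)^2/‖cc‖^2
      + 16*M*ρ^(a+ν)*((ν:ℝ)+1)^2/‖cc‖ with hθdef
  have hρ0 : (0:ℝ) < ρ := by linarith
  have t2 : (0:ℝ) ≤ 128*M'*ρ^(a+1)/‖cc‖ := by positivity
  have t3 : (0:ℝ) ≤ 512*(e:ℝ)*M^2*16^e*ρ^(a+ν)*((ν:ℝ)+1)^2/‖cc‖^2 := by positivity
  have t4 : (0:ℝ) ≤ 16*M*ρ^(a+ν)*((ν:ℝ)+1)^2/‖cc‖ := by positivity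
  have hθ1 : 1 ≤ θ := by rw [hθdef]; linarith
  have hθpos : (0:ℝ) < θ := lt_of_lt_of_le one_pos hθ1
  have hθρ4 : 4*ρ ≤ θ := by rw [hθdef]; linarith
  have hx4 : ρ/θ ≤ 1/4 := by
    rw [div_le_div_iff₀ hθpos (by norm_num)]; linarith
  have hx0 : 0 ≤ ρ/θ := by positivity
  have hν1 : 1 ≤ ν := by omega
  set C : ℝ := 16*M*ρ^(a+ν)*((ν:ℝ)+1)^2 / (‖cc‖ * θ^ν) with hCdef
  have hCpos : 0 < C := by rw [hCdef]; positivity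
  have hC1 : C ≤ 1 := by
    rw [hCdef, div_le_one (by positivity)]
    have h1 : 16*M*ρ^(a+ν)*((ν:ℝ)+1)^2/‖cc‖ ≤ θ := by rw [hθdef]; linarith
    have h2 : θ ≤ θ^ν := le_self_pow₀ (by linarith) (by omega)
    calc 16*M*ρ^(a+ν)*((ν:ℝ)+1)^2 = (16*M*ρ^(a+ν)*((ν:ℝ)+1)^2/‖cc‖) * ‖cc‖ :=
          (div_mul_cancel₀ _ (ne_of_gt hccpos)).symm
    _ ≤ θ^ν * ‖cc‖ := by
        apply mul_le_mul_of_nonneg_right (h1.trans h2) hccpos.le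
    _ = ‖cc‖ * θ^ν := by ring
  have hmain : ∀ k, nrm w r k ≤ C * θ^k * om k := by
    intro k
    induction k using Nat.strong_induction_on with
    | _ k IH =>
    rcases Nat.lt_or_ge k ν with hkν | hkν
    · rw [Vw_nrm hw hVr hkν]
      exact mul_nonneg (by positivity) (om_pos k).le
    · -- main case k ≥ ν
      set r' : MvPowerSeries (Fin n) ℂ :=
        (fun β => if wdeg w β < k then coeff β r else 0) with hr'def
      have hr'coeff : ∀ β, coeff β r' = if wdeg w β < k then coeff β r else 0 :=
        fun β => rfl
      have hVr' : Vw w ν r' := by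
        intro β hβ
        rw [hr'coeff]
        split
        · exact hVr β hβ
        · rfl
      have hsub : Vw w k (r - r') := by
        intro β hβ
        rw [map_sub, hr'coeff β, if_pos hβ, sub_self]
      have hr'b : ∀ s, nrm w r' s ≤ C * θ^s * om s := by
        intro s
        rcases Nat.lt_or_ge s k with hsk | hsk
        · have heq : nrm w r' s = nrm w r s := by
            unfold nrm
            apply Finset.sum_congr rfl
            intro β hβ
            rw [hr'coeff, if_pos (((mem_T hw).mp hβ) ▸ hsk)]
          rw [heq]
          exact IH s hsk
        · have heq : nrm w r' s = 0 := by
            unfold nrm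
            apply Finset.sum_eq_zero
            intro β hβ
            rw [hr'coeff, if_neg (not_lt.mpr (((mem_T hw).mp hβ) ▸ hsk)), norm_zero]
          rw [heq]
          exact mul_nonneg (by positivity) (om_pos s).le
      -- bound on powers of r'
      have hpow : ∀ j, 1 ≤ j → ∀ s, nrm w (r'^j) s ≤ 16^(j-1) * C^j * θ^s * om s := by
        intro j hj
        induction j with
        | zero => omega
        | succ j ihj =>
          rcases Nat.eq_zero_or_pos j with rfl | hjpos
          · intro s
            simpa using hr'b s
          · intro s
            have hstep : ∀ i ∈ range (s+1),
                nrm w (r'^j) i * nrm w r' (s-i)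
                  ≤ (16^(j-1) * C^j * θ^i * om i) * (C * θ^(s-i) * om (s-i)) := by
              intro i _
              exact mul_le_mul (ihj hjpos i) (hr'b (s-i)) (nrm_nonneg _ _ _)
                (mul_nonneg (by positivity) (om_pos i).le)
            calc nrm w (r'^(j+1)) s = nrm w (r'^j * r') s := by rw [pow_succ]
            _ ≤ ∑ i ∈ range (s+1), nrm w (r'^j) i * nrm w r' (s-i) :=
                nrm_mul_le hw _ _ s
            _ ≤ ∑ i ∈ range (s+1), (16^(j-1) * C^j * θ^i * om i) * (C * θ^(s-i) * om (s-i)) :=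
                Finset.sum_le_sum hstep
            _ = 16^(j-1) * C^(j+1) * θ^s * ∑ i ∈ range (s+1), om i * om (s-i) := by
                rw [Finset.mul_sum]
                apply Finset.sum_congr rfl
                intro i hi
                have his : i ≤ s := Nat.lt_succ_iff.mp (Finset.mem_range.mp hi)
                have : θ^i * θ^(s-i) = θ^s := by
                  rw [← pow_add]
                  congr 1
                  omega
                calc (16^(j-1) * C^j * θ^i * om i) * (C * θ^(s-i) * om (s-i))
                    = 16^(j-1) * C^(j+1) * (θ^i * θ^(s-i)) * (om i * om (s-i)) := by ring
                _ = 16^(j-1) * C^(j+1) * θ^s * (om i * om (s-i)) := by rw [this]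
            _ ≤ 16^(j-1) * C^(j+1) * θ^s * (16 * om s) := by
                apply mul_le_mul_of_nonneg_left (om_subconv s) (by positivity)
            _ = 16^((j+1)-1) * C^(j+1) * θ^s * om s := by
                have h16 : (16:ℝ)^(j-1) * 16 = 16^((j+1)-1) := by
                  rw [← pow_succ]
                  congr 1
                  omega
                calc 16^(j-1) * C^(j+1) * θ^s * (16 * om s)
                    = (16^(j-1) * 16) * C^(j+1) * θ^s * om s := by ring
                _ = 16^((j+1)-1) * C^(j+1) * θ^s * om s := by rw [h16]
      -- the basic inequality from the identity
      set c1' := c 1 - monomial α cc with hc1'def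
      set B' := c 0 + c1' * r' + ∑ j ∈ Ico 2 (e+1), c j * r'^j with hB'def
      have hbase : ‖cc‖ * nrm w r k ≤ nrm w B' (a + k) := by
        have hid := core_id he c r r' α cc hν hrel hVr hVr' hVc1 k hsub
        calc ‖cc‖ * nrm w r k = ∑ β ∈ T w k, ‖cc‖ * ‖coeff β r‖ := by
              rw [nrm, Finset.mul_sum]
        _ = ∑ β ∈ T w k, ‖coeff (α+β) B'‖ := by
            apply Finset.sum_congr rfl
            intro β hβ
            rw [← norm_mul, hid β ((mem_T hw).mp hβ), norm_neg]
        _ ≤ nrm w B' (wdeg w α + k) := nrm_shift_le hw B' α k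
      have hsplitB : nrm w B' (a+k) ≤ nrm w (c 0) (a+k) + nrm w (c1' * r') (a+k)
          + ∑ j ∈ Ico 2 (e+1), nrm w (c j * r'^j) (a+k) := by
        calc nrm w B' (a+k)
            ≤ nrm w (c 0 + c1' * r') (a+k) + nrm w (∑ j ∈ Ico 2 (e+1), c j * r'^j) (a+k) :=
              nrm_add_le w _ _ _
        _ ≤ (nrm w (c 0) (a+k) + nrm w (c1' * r') (a+k))
              + ∑ j ∈ Ico 2 (e+1), nrm w (c j * r'^j) (a+k) :=
            add_le_add (nrm_add_le w _ _ _) (nrm_sum_le w _ _ _)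
      have hA : nrm w (c 0) (a+k) ≤ (‖cc‖/4) * (C * θ^k * om k) := by
        have h1 : nrm w (c 0) (a+k) ≤ M * ρ^(a+k) := hcb 0 (by omega) _
        set t := k - ν with htdef
        have hsplitρ : ρ^(a+k) = ρ^(a+ν) * ρ^t := by
          rw [← pow_add]; congr 1; omega
        have hρt : ρ^t = (ρ/θ)^t * θ^t := by
          rw [div_pow, div_mul_cancel₀]
          positivity
        have hom1 : 1 ≤ ((ν:ℝ)+1)^2 * ((t:ℝ)+1)^2 * om k := by
          have hnat : k + 1 ≤ (ν+1) * (t+1) := by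
            have hexp : (ν+1) * (t+1) = ν*t + ν + t + 1 := by ring
            omega
          have hcast : ((k:ℝ)+1) ≤ (((ν:ℝ)+1) * ((t:ℝ)+1)) := by exact_mod_cast hnat
          have hc2 : ((k:ℝ)+1)^2 ≤ (((ν:ℝ)+1) * ((t:ℝ)+1))^2 := by
            nlinarith [Nat.cast_nonneg (α := ℝ) k, Nat.cast_nonneg (α := ℝ) ν,
              Nat.cast_nonneg (α := ℝ) t]
          have hkpos : (0:ℝ) < ((k:ℝ)+1)^2 := by positivity
          calc (1:ℝ) = ((k:ℝ)+1)^2 * (((k:ℝ)+1)^2)⁻¹ :=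
              (mul_inv_cancel₀ (ne_of_gt hkpos)).symm
          _ ≤ (((ν:ℝ)+1) * ((t:ℝ)+1))^2 * (((k:ℝ)+1)^2)⁻¹ :=
              mul_le_mul_of_nonneg_right hc2 (by positivity)
          _ = ((ν:ℝ)+1)^2 * ((t:ℝ)+1)^2 * om k := by rw [om]; ring
        have hpt := pt_bound hx0 hx4 t
        have key : ρ^(a+k) ≤ 4 * ρ^(a+ν) * ((ν:ℝ)+1)^2 * θ^t * om k := by
          calc ρ^(a+k) = ρ^(a+ν) * ρ^t * 1 := by rw [hsplitρ]; ring
          _ ≤ ρ^(a+ν) * ρ^t * (((ν:ℝ)+1)^2 * ((t:ℝ)+1)^2 * om k) := by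
              apply mul_le_mul_of_nonneg_left hom1 (by positivity)
          _ = (ρ^(a+ν) * ((ν:ℝ)+1)^2 * (θ^t * om k)) * ((ρ/θ)^t * ((t:ℝ)+1)^2) := by
              rw [hρt]; ring
          _ ≤ (ρ^(a+ν) * ((ν:ℝ)+1)^2 * (θ^t * om k)) * 4 := by
              apply mul_le_mul_of_nonneg_left hpt
              exact mul_nonneg (by positivity) (mul_nonneg (by positivity) (om_pos k).le)
          _ = 4 * ρ^(a+ν) * ((ν:ℝ)+1)^2 * θ^t * om k := by ring
        have hθν : θ^k = θ^ν * θ^t := by rw [← pow_add]; congr 1; omega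
        have hθnz : (θ:ℝ)^ν ≠ 0 := by positivity
        have hccnz : ‖cc‖ ≠ 0 := ne_of_gt hccpos
        have hCθ : C * θ^ν = 16*M*ρ^(a+ν)*((ν:ℝ)+1)^2/‖cc‖ := by
          rw [hCdef, ← div_div, div_mul_cancel₀ _ hθnz]
        have hrhs : (‖cc‖/4) * (C * θ^k * om k)
            = 4*M*ρ^(a+ν)*((ν:ℝ)+1)^2 * θ^t * om k := by
          have hCk : C * θ^k = (16*M*ρ^(a+ν)*((ν:ℝ)+1)^2/‖cc‖) * θ^t := by
            rw [hθν, ← mul_assoc, hCθ]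
          calc (‖cc‖/4) * (C * θ^k * om k)
              = (‖cc‖ * (16*M*ρ^(a+ν)*((ν:ℝ)+1)^2/‖cc‖)) * θ^t * om k / 4 := by
                rw [hCk]; ring
          _ = (16*M*ρ^(a+ν)*((ν:ℝ)+1)^2) * θ^t * om k / 4 := by
                rw [mul_div_assoc', mul_div_cancel_left₀ _ hccnz]
          _ = 4*M*ρ^(a+ν)*((ν:ℝ)+1)^2 * θ^t * om k := by ring
        rw [hrhs]
        calc nrm w (c 0) (a+k) ≤ M * ρ^(a+k) := h1
        _ ≤ M * (4 * ρ^(a+ν) * ((ν:ℝ)+1)^2 * θ^t * om k) :=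
            mul_le_mul_of_nonneg_left key (by linarith)
        _ = 4*M*ρ^(a+ν)*((ν:ℝ)+1)^2*θ^t*om k := by ring
      have hB : nrm w (c1' * r') (a+k) ≤ (‖cc‖/4) * (C * θ^k * om k) := by
        have hc1'b : ∀ l, nrm w c1' l ≤ M' * ρ^l := by
          intro l
          have hple : (1:ℝ) ≤ ρ^l := one_le_pow₀ hρ
          calc nrm w c1' l ≤ nrm w (c 1) l + nrm w (monomial α cc) l :=
              nrm_sub_le w _ _ l
          _ ≤ M*ρ^l + ‖cc‖ := add_le_add (hcb 1 he l) (nrm_monomial_le w α cc l)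
          _ ≤ M*ρ^l + ‖cc‖*ρ^l := by nlinarith [hccpos]
          _ = M'*ρ^l := by rw [hM'def]; ring
        have hc1'0 : ∀ l, l < a + 1 → nrm w c1' l = 0 :=
          fun l hl => Vw_nrm hw hVc1 hl
        set K0 : ℝ := M'*ρ^(a+1)*C*θ^k*om k/ρ with hK0def
        have hK0 : 0 ≤ K0 := by
          rw [hK0def]
          apply div_nonneg _ hρ0.le
          exact mul_nonneg (by positivity) (om_pos k).le
        calc nrm w (c1' * r') (a+k)
            ≤ ∑ l ∈ range (a+k+1), nrm w c1' l * nrm w r' (a+k-l) :=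
              nrm_mul_le hw _ _ _
        _ = ∑ l ∈ Ico (a+1) (a+k+1), nrm w c1' l * nrm w r' (a+k-l) := by
            rw [range_eq_Ico,
              ← Finset.sum_Ico_consecutive _ (Nat.zero_le (a+1)) (by omega : a+1 ≤ a+k+1)]
            have hzero : ∑ l ∈ Ico 0 (a+1), nrm w c1' l * nrm w r' (a+k-l) = 0 := by
              apply Finset.sum_eq_zero
              intro l hl
              rw [Finset.mem_Ico] at hl
              rw [hc1'0 l hl.2, zero_mul]
            rw [hzero, zero_add]
        _ = ∑ u ∈ range k, nrm w c1' (a+1+u) * nrm w r' (a+k-(a+1+u)) := by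
            rw [Finset.sum_Ico_eq_sum_range]
            have hcount : a+k+1-(a+1) = k := by omega
            rw [hcount]
        _ ≤ ∑ u ∈ range k, K0 * ((ρ/θ)^(u+1) * ((u:ℝ)+2)^2) := by
            apply Finset.sum_le_sum
            intro u hu
            have huk : u < k := Finset.mem_range.mp hu
            have hsub2 : a+k-(a+1+u) = k-1-u := by omega
            rw [hsub2]
            have step1 : nrm w c1' (a+1+u) * nrm w r' (k-1-u)
                ≤ (M'*ρ^(a+1+u)) * (C*θ^(k-1-u)*om (k-1-u)) :=
              mul_le_mul (hc1'b _) (hr'b _) (nrm_nonneg _ _ _) (by positivity)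
            refine step1.trans ?_
            have hom2 : om (k-1-u) ≤ ((u:ℝ)+2)^2 * om k := by
              have h3 : k-1-u = k-(u+1) := by omega
              rw [h3]
              calc om (k-(u+1)) ≤ (((u+1:ℕ):ℝ)+1)^2 * om k := om_ratio (by omega)
              _ = ((u:ℝ)+2)^2 * om k := by push_cast; ring
            have hρs : ρ^(a+1+u) = ρ^(a+1) * ρ^u := by rw [← pow_add]
            have hpowid : ρ^u * θ^(k-1-u) = θ^k * (ρ/θ)^(u+1) / ρ := by
              have e2 : θ^k = θ^(k-1-u) * θ^(u+1) := by
                rw [← pow_add]; congr 1; omega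
              rw [div_pow, e2]
              have e3 : ρ^(u+1) = ρ^u * ρ := pow_succ ρ u
              rw [e3]
              field_simp
            calc (M'*ρ^(a+1+u)) * (C*θ^(k-1-u)*om (k-1-u))
                ≤ (M'*ρ^(a+1+u)) * (C*θ^(k-1-u)*(((u:ℝ)+2)^2 * om k)) := by
                  apply mul_le_mul_of_nonneg_left _ (by positivity)
                  exact mul_le_mul_of_nonneg_left hom2 (by positivity)
            _ = (M'*ρ^(a+1)*C*om k) * (ρ^u * θ^(k-1-u)) * ((u:ℝ)+2)^2 := by
                  rw [hρs]; ring
            _ = (M'*ρ^(a+1)*C*om k) * (θ^k * (ρ/θ)^(u+1) / ρ) * ((u:ℝ)+2)^2 := by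
                  rw [hpowid]
            _ = K0 * ((ρ/θ)^(u+1) * ((u:ℝ)+2)^2) := by
                  rw [hK0def]; ring
        _ = K0 * ∑ u ∈ range k, (ρ/θ)^(u+1) * ((u:ℝ)+2)^2 := by
            rw [Finset.mul_sum]
        _ ≤ K0 * (32 * (ρ/θ)) :=
            mul_le_mul_of_nonneg_left (sum_sq_geom_shift hx0 hx4 k) hK0
        _ = (32*M'*ρ^(a+1)/θ) * (C*θ^k*om k) := by
            rw [hK0def]
            field_simp
        _ ≤ (‖cc‖/4) * (C * θ^k * om k) := by
            apply mul_le_mul_of_nonneg_right _ (mul_nonneg (by positivity) (om_pos k).le)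
            rw [div_le_div_iff₀ hθpos (by norm_num : (0:ℝ) < 4)]
            have hT : 128*M'*ρ^(a+1)/‖cc‖ ≤ θ := by rw [hθdef]; linarith
            have h2 : 128*M'*ρ^(a+1) ≤ θ * ‖cc‖ := (div_le_iff₀ hccpos).mp hT
            nlinarith [h2]
      have hC : ∑ j ∈ Ico 2 (e+1), nrm w (c j * r'^j) (a+k)
          ≤ (‖cc‖/4) * (C * θ^k * om k) := by
        have homk : om (a+k) ≤ om k := om_anti (by omega)
        have hθak : θ^(a+k) = θ^a * θ^k := pow_add θ a k
        have hCj : ∀ j ∈ Ico 2 (e+1), nrm w (c j * r'^j) (a+k)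
            ≤ 8*M*16^(e-1)*C^2*θ^a * (θ^k * om k) := by
          intro j hj
          rw [Finset.mem_Ico] at hj
          obtain ⟨hj2, hje⟩ := hj
          have hjle : j ≤ e := by omega
          have hj1 : 1 ≤ j := by omega
          have h16 : (16:ℝ)^(j-1) ≤ 16^(e-1) :=
            pow_le_pow_right₀ (by norm_num) (by omega)
          have hCj2 : C^j ≤ C^2 := pow_le_pow_of_le_one hCpos.le hC1 (by omega)
          calc nrm w (c j * r'^j) (a+k)
              ≤ ∑ l ∈ range (a+k+1), nrm w (c j) l * nrm w (r'^j) (a+k-l) :=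
                nrm_mul_le hw _ _ _
          _ ≤ ∑ l ∈ range (a+k+1),
                (M*16^(j-1)*C^j*θ^(a+k)*om (a+k)) * ((ρ/θ)^l * ((l:ℝ)+1)^2) := by
              apply Finset.sum_le_sum
              intro l hl
              have hlk : l ≤ a+k := Nat.lt_succ_iff.mp (Finset.mem_range.mp hl)
              have step1 : nrm w (c j) l * nrm w (r'^j) (a+k-l)
                  ≤ (M*ρ^l) * (16^(j-1)*C^j*θ^(a+k-l)*om (a+k-l)) :=
                mul_le_mul (hcb j hjle l) (hpow j hj1 _) (nrm_nonneg _ _ _)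
                  (by positivity)
              refine step1.trans ?_
              have hom2 : om (a+k-l) ≤ ((l:ℝ)+1)^2 * om (a+k) := om_ratio hlk
              have hpowid : ρ^l * θ^(a+k-l) = θ^(a+k) * (ρ/θ)^l := by
                have e2 : θ^(a+k) = θ^(a+k-l) * θ^l := by
                  rw [← pow_add]; congr 1; omega
                rw [div_pow, e2]
                field_simp
              calc (M*ρ^l) * (16^(j-1)*C^j*θ^(a+k-l)*om (a+k-l))
                  ≤ (M*ρ^l) * (16^(j-1)*C^j*θ^(a+k-l)*(((l:ℝ)+1)^2 * om (a+k))) := by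
                    apply mul_le_mul_of_nonneg_left _ (by positivity)
                    exact mul_le_mul_of_nonneg_left hom2 (by positivity)
              _ = (M*16^(j-1)*C^j*om (a+k)) * (ρ^l * θ^(a+k-l)) * ((l:ℝ)+1)^2 := by
                    ring
              _ = (M*16^(j-1)*C^j*om (a+k)) * (θ^(a+k) * (ρ/θ)^l) * ((l:ℝ)+1)^2 := by
                    rw [hpowid]
              _ = (M*16^(j-1)*C^j*θ^(a+k)*om (a+k)) * ((ρ/θ)^l * ((l:ℝ)+1)^2) := by
                    ring
          _ = (M*16^(j-1)*C^j*θ^(a+k)*om (a+k))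
                * ∑ l ∈ range (a+k+1), (ρ/θ)^l * ((l:ℝ)+1)^2 := by
              rw [Finset.mul_sum]
          _ ≤ (M*16^(j-1)*C^j*θ^(a+k)*om (a+k)) * 8 := by
              apply mul_le_mul_of_nonneg_left (sum_sq_geom hx0 hx4 _)
              exact mul_nonneg (by positivity) (om_pos _).le
          _ ≤ (M*16^(e-1)*C^2*θ^(a+k)*om k) * 8 := by
              have hbase0 : (0:ℝ) ≤ M*16^(j-1)*C^j*θ^(a+k) := by positivity
              apply mul_le_mul_of_nonneg_right _ (by norm_num)
              calc M*16^(j-1)*C^j*θ^(a+k)*om (a+k)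
                  ≤ M*16^(j-1)*C^j*θ^(a+k)*om k :=
                    mul_le_mul_of_nonneg_left homk hbase0
              _ ≤ M*16^(e-1)*C^2*θ^(a+k)*om k := by
                  have h1 : M*16^(j-1)*C^j ≤ M*16^(e-1)*C^2 := by
                    apply mul_le_mul (mul_le_mul_of_nonneg_left h16 (by linarith)) hCj2
                      (by positivity) (by positivity)
                  apply mul_le_mul_of_nonneg_right _ (om_pos k).le
                  exact mul_le_mul_of_nonneg_right h1 (by positivity)
          _ = 8*M*16^(e-1)*C^2*θ^a * (θ^k * om k) := by
              rw [hθak]; ring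
        calc ∑ j ∈ Ico 2 (e+1), nrm w (c j * r'^j) (a+k)
            ≤ ∑ _j ∈ Ico 2 (e+1), 8*M*16^(e-1)*C^2*θ^a * (θ^k * om k) :=
              Finset.sum_le_sum hCj
        _ = ((e-1 : ℕ) : ℝ) * (8*M*16^(e-1)*C^2*θ^a * (θ^k * om k)) := by
            rw [Finset.sum_const, nsmul_eq_mul, Nat.card_Ico]
            have hc2 : e + 1 - 2 = e - 1 := by omega
            rw [hc2]
        _ ≤ (e:ℝ) * (8*M*16^(e-1)*C^2*θ^a * (θ^k * om k)) := by
            apply mul_le_mul_of_nonneg_right _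
              (mul_nonneg (by positivity) (mul_nonneg (by positivity) (om_pos k).le))
            exact_mod_cast Nat.cast_le.mpr (by omega : e - 1 ≤ e)
        _ ≤ (‖cc‖/4) * (C * θ^k * om k) := by
            have hkey : (e:ℝ)*8*M*16^(e-1)*θ^a*C ≤ ‖cc‖/4 := by
              have hccnz2 : (‖cc‖:ℝ) ≠ 0 := ne_of_gt hccpos
              have hθν2 : θ^ν = θ^(ν-a) * θ^a := by rw [← pow_add]; congr 1; omega
              have hT3 : 512*(e:ℝ)*M^2*16^e*ρ^(a+ν)*((ν:ℝ)+1)^2/‖cc‖^2 ≤ θ := by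
                rw [hθdef]; linarith
              have hT3' : 512*(e:ℝ)*M^2*16^e*ρ^(a+ν)*((ν:ℝ)+1)^2 ≤ θ * ‖cc‖^2 :=
                (div_le_iff₀ (by positivity)).mp hT3
              have hθνa : θ ≤ θ^(ν-a) := le_self_pow₀ (by linarith) (by omega)
              have hmain2 : 4*((e:ℝ)*8*M*16^(e-1)) * (16*M*ρ^(a+ν)*((ν:ℝ)+1)^2)
                  ≤ ‖cc‖^2 * θ^(ν-a) := by
                have h16 : (16:ℝ)^(e-1) ≤ 16^e :=
                  pow_le_pow_right₀ (by norm_num) (by omega)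
                calc 4*((e:ℝ)*8*M*16^(e-1)) * (16*M*ρ^(a+ν)*((ν:ℝ)+1)^2)
                    = 512*(e:ℝ)*M^2*16^(e-1)*ρ^(a+ν)*((ν:ℝ)+1)^2 := by ring
                _ ≤ 512*(e:ℝ)*M^2*16^e*ρ^(a+ν)*((ν:ℝ)+1)^2 := by gcongr
                _ ≤ θ * ‖cc‖^2 := hT3'
                _ ≤ θ^(ν-a) * ‖cc‖^2 :=
                    mul_le_mul_of_nonneg_right hθνa (by positivity)
                _ = ‖cc‖^2 * θ^(ν-a) := by ring
              -- now divide
              rw [hCdef, hθν2, ← mul_div_assoc,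
                div_le_div_iff₀ (by positivity) (by norm_num : (0:ℝ) < 4)]
              calc (e:ℝ)*8*M*16^(e-1)*θ^a*(16*M*ρ^(a+ν)*((ν:ℝ)+1)^2)*4
                  = (4*((e:ℝ)*8*M*16^(e-1)) * (16*M*ρ^(a+ν)*((ν:ℝ)+1)^2)) * θ^a := by
                    ring
              _ ≤ (‖cc‖^2*θ^(ν-a)) * θ^a :=
                    mul_le_mul_of_nonneg_right hmain2 (by positivity)
              _ = ‖cc‖*(‖cc‖*(θ^(ν-a)*θ^a)) := by ring
            calc (e:ℝ) * (8*M*16^(e-1)*C^2*θ^a * (θ^k * om k))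
                = ((e:ℝ)*8*M*16^(e-1)*θ^a*C) * (C * θ^k * om k) := by ring
            _ ≤ (‖cc‖/4) * (C * θ^k * om k) := by
                apply mul_le_mul_of_nonneg_right hkey
                exact mul_nonneg (by positivity) (om_pos k).le
      have hfin : ‖cc‖ * nrm w r k ≤ ‖cc‖ * (C * θ^k * om k) := by
        have h34 : (3:ℝ) * (‖cc‖/4) ≤ ‖cc‖ := by linarith
        have hpos : (0:ℝ) ≤ C * θ^k * om k := mul_nonneg (by positivity) (om_pos k).le
        nlinarith [hbase, hsplitB, hA, hB, hC]
      exact le_of_mul_le_mul_left hfin hccpos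
  apply isConvergent_of_nrm_le hw C θ hCpos hθ1
  intro k
  calc nrm w r k ≤ C * θ^k * om k := hmain k
  _ ≤ C * θ^k * 1 := by
      exact mul_le_mul_of_nonneg_left (om_le_one k) (by positivity)
  _ = C * θ^k := mul_one _

lemma Vw_nsmul {w : Fin n → ℕ} {t : ℕ} {f : MvPowerSeries (Fin n) ℂ}
    (hf : Vw w t f) (c : ℕ) : Vw w t (c • f) := by
  intro β hβ
  rw [map_nsmul, hf β hβ, smul_zero]

lemma exists_coeff_ne {f : MvPowerSeries (Fin n) ℂ} (hf : f ≠ 0) :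
    ∃ β, coeff β f ≠ 0 := by
  by_contra hall
  push_neg at hall
  exact hf (MvPowerSeries.ext fun β => by rw [hall β, map_zero])

lemma common_geom {w : Fin n → ℕ} (hw : ∀ i, 1 ≤ w i) (e : ℕ)
    (F : ℕ → MvPowerSeries (Fin n) ℂ) (h : ∀ j ≤ e, IsConvergent (F j)) :
    ∃ M ρ : ℝ, 1 ≤ M ∧ 1 ≤ ρ ∧ ∀ j ≤ e, ∀ k, nrm w (F j) k ≤ M * ρ^k := by
  induction e with
  | zero =>
    obtain ⟨M, ρ, hM, hρ, hb⟩ := nrm_le_geom hw (h 0 le_rfl)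
    exact ⟨M, ρ, hM, hρ, fun j hj k => by rw [Nat.le_zero.mp hj]; exact hb k⟩
  | succ e ih =>
    obtain ⟨M1, ρ1, hM1, hρ1, h1⟩ := ih (fun j hj => h j (by omega))
    obtain ⟨M2, ρ2, hM2, hρ2, h2⟩ := nrm_le_geom hw (h (e+1) le_rfl)
    refine ⟨max M1 M2, max ρ1 ρ2, le_trans hM1 (le_max_left _ _),
      le_trans hρ1 (le_max_left _ _), ?_⟩
    intro j hj k
    have hρρ : (0:ℝ) ≤ max ρ1 ρ2 := by
      have : (1:ℝ) ≤ ρ1 := hρ1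
      have := le_max_left ρ1 ρ2
      linarith
    rcases Nat.lt_succ_iff_lt_or_eq.mp (Nat.lt_succ_of_le hj) with hj' | hj'
    · calc nrm w (F j) k ≤ M1 * ρ1 ^ k := h1 j (by omega) k
      _ ≤ max M1 M2 * (max ρ1 ρ2) ^ k := by
          apply mul_le_mul (le_max_left _ _)
            (pow_le_pow_left₀ (by linarith) (le_max_left _ _) k) (by positivity)
            (by linarith [le_max_left M1 M2])
    · calc nrm w (F j) k ≤ M2 * ρ2 ^ k := by rw [hj']; exact h2 k
      _ ≤ max M1 M2 * (max ρ1 ρ2) ^ k := by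
          apply mul_le_mul (le_max_right _ _)
            (pow_le_pow_left₀ (by linarith) (le_max_right _ _) k) (by positivity)
            (by linarith [le_max_left M1 M2])

end AlgConv



open AlgConv in
set_option maxHeartbeats 3200000 in
/-- If `g ∈ ℂ[[x₁,…,xₙ]]` satisfies a nontrivial polynomial relation
`f₀·g^d + f₁·g^{d-1} + ⋯ + f_d = 0` whose coefficients `f₀,…,f_d` are convergent
power series (not all zero), then `g` is itself convergent; i.e.
`closure(ℂ{x₁,…,xₙ}) ∩ ℂ[[x₁,…,xₙ]] = ℂ{x₁,…,xₙ}`. -/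
theorem algebraic_over_convergent_is_convergent
    (n : ℕ) (hn : 1 ≤ n) (g : MvPowerSeries (Fin n) ℂ)
    (d : ℕ) (hd : 1 ≤ d) (f : ℕ → MvPowerSeries (Fin n) ℂ)
    (hconv : ∀ i ≤ d, IsConvergent (f i))
    (hne : ∃ i ≤ d, f i ≠ 0)
    (heq : ∑ i ∈ Finset.range (d + 1), f i * g ^ (d - i) = 0) :
    IsConvergent g := by
  classical
  -- Step 1: strip leading zero coefficients
  have hnz : ∃ j, f j ≠ 0 ∧ j ≤ d := by
    obtain ⟨i, hid, hif⟩ := hne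
    exact ⟨i, hif, hid⟩
  obtain ⟨hfj0, hj0d⟩ := Nat.find_spec hnz
  have hprev : ∀ i, i < Nat.find hnz → f i = 0 := by
    intro i hi
    by_contra hfi
    exact Nat.find_min hnz hi ⟨hfi, by omega⟩
  have hj0lt : Nat.find hnz < d := by
    rcases Nat.lt_or_ge (Nat.find hnz) d with h | h
    · exact h
    · exfalso
      have hj0d' : Nat.find hnz = d := by omega
      have hz : ∑ i ∈ Finset.range d, f i * g ^ (d-i) = 0 :=
        Finset.sum_eq_zero fun i hi => by
          rw [hprev i (by rw [hj0d']; exact Finset.mem_range.mp hi), zero_mul]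
      rw [Finset.sum_range_succ, hz, zero_add, Nat.sub_self, pow_zero, mul_one] at heq
      rw [hj0d'] at hfj0
      exact hfj0 heq
  have hrel0 : ∑ i ∈ Finset.range ((d - Nat.find hnz)+1),
      f (Nat.find hnz + i) * g ^ ((d - Nat.find hnz) - i) = 0 := by
    have hsplit : ∑ i ∈ Finset.range (d+1), f i * g^(d-i)
        = ∑ i ∈ Finset.Ico 0 (Nat.find hnz), f i * g^(d-i)
          + ∑ i ∈ Finset.Ico (Nat.find hnz) (d+1), f i * g^(d-i) := by
      rw [Finset.range_eq_Ico,
        ← Finset.sum_Ico_consecutive _ (Nat.zero_le (Nat.find hnz))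
          (by omega : Nat.find hnz ≤ d+1)]
    have hz1 : ∑ i ∈ Finset.Ico 0 (Nat.find hnz), f i * g^(d-i) = 0 :=
      Finset.sum_eq_zero fun i hi => by
        rw [hprev i (Finset.mem_Ico.mp hi).2, zero_mul]
    have h2 : ∑ i ∈ Finset.Ico (Nat.find hnz) (d+1), f i * g^(d-i)
        = ∑ i ∈ Finset.range ((d - Nat.find hnz)+1),
            f (Nat.find hnz + i) * g^((d - Nat.find hnz)-i) := by
      rw [Finset.sum_Ico_eq_sum_range]
      have hcnt : d+1-(Nat.find hnz) = (d - Nat.find hnz)+1 := by omega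
      rw [hcnt]
      apply Finset.sum_congr rfl
      intro i hi
      have hii : i ≤ d - Nat.find hnz := by
        have := Finset.mem_range.mp hi
        omega
      have hde : d - (Nat.find hnz + i) = (d - Nat.find hnz) - i := by omega
      rw [hde]
    rw [hsplit, hz1, zero_add, h2] at heq
    exact heq
  have hPex : ∃ e : ℕ, 1 ≤ e ∧ ∃ b : ℕ → MvPowerSeries (Fin n) ℂ,
      (∀ i, i ≤ e → IsConvergent (b i)) ∧ b 0 ≠ 0 ∧
      ∑ i ∈ Finset.range (e+1), b i * g ^ (e-i) = 0 := by
    refine ⟨d - Nat.find hnz, by omega, fun i => f (Nat.find hnz + i), ?_, ?_, hrel0⟩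
    · intro i hi
      exact hconv _ (by omega)
    · simpa using hfj0
  -- Step 2: minimal-degree relation
  obtain ⟨he1, b, hbconv, hb0, hbrel⟩ := Nat.find_spec hPex
  set e := Nat.find hPex with hedef
  -- Step 3: the derivative-like series is nonzero
  set hh : MvPowerSeries (Fin n) ℂ
    := ∑ i ∈ Finset.range e, (e-i) • (b i * g ^ (e-1-i)) with hhdef
  have hhne : hh ≠ 0 := by
    rcases Nat.lt_or_ge e 2 with he2 | he2
    · have he1' : e = 1 := by omega
      have hone : hh = b 0 := by
        rw [hhdef, he1']
        simp
      rw [hone]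
      exact hb0
    · intro hh0
      have hcontra := Nat.find_min hPex (show e - 1 < e by omega)
      apply hcontra
      refine ⟨by omega, fun i => (e-i) • b i, ?_, ?_, ?_⟩
      · intro i hi
        exact conv_nsmul _ (hbconv i (by omega))
      · obtain ⟨β, hβ⟩ := exists_coeff_ne hb0
        intro hz
        apply hβ
        have hcz := congrArg (MvPowerSeries.coeff β) hz
        rw [map_nsmul, map_zero] at hcz
        have hmul : ((e:ℂ)) * MvPowerSeries.coeff β (b 0) = 0 := by
          rw [← nsmul_eq_mul]
          exact_mod_cast hcz
        rcases mul_eq_zero.mp hmul with h | h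
        · exfalso
          have hene : (e:ℂ) ≠ 0 := by
            exact_mod_cast (by omega : e ≠ 0)
          exact hene h
        · exact h
      · have hsm : ∀ i ∈ Finset.range ((e-1)+1),
            ((e-i) • b i) * g ^ ((e-1)-i) = (e-i) • (b i * g ^ (e-1-i)) := by
          intro i _
          rw [smul_mul_assoc]
        rw [Finset.sum_congr rfl hsm]
        have hr1 : (e-1)+1 = e := by omega
        rw [hr1]
        exact hh0
  -- Step 4: minimal total degree of hh
  have hex2 : ∃ k : ℕ, ∃ β : Fin n →₀ ℕ, deg β = k ∧ MvPowerSeries.coeff β hh ≠ 0 := by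
    obtain ⟨β, hβ⟩ := exists_coeff_ne hhne
    exact ⟨deg β, β, rfl, hβ⟩
  obtain ⟨β₀, hβ₀deg, hβ₀ne⟩ := Nat.find_spec hex2
  set m := Nat.find hex2 with hmdef
  have hmmin : ∀ γ, MvPowerSeries.coeff γ hh ≠ 0 → m ≤ deg γ := by
    intro γ hγ
    by_contra hlt
    exact Nat.find_min hex2 (by omega) ⟨γ, rfl, hγ⟩
  -- Step 5: weights and the extremal monomial
  set w := wt (n := n) m with hwdef
  have hw : ∀ i, 1 ≤ w i := wt_ge_one m
  have hwge : ∀ β : Fin n →₀ ℕ, (m+2)^(n+1) * deg β ≤ wdeg w β :=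
    fun β => wdeg_wt_ge m β
  have hwle : ∀ β : Fin n →₀ ℕ, wdeg w β ≤ (m+2)^(n+1) * deg β + (m+2)^n * deg β :=
    fun β => wdeg_wt_le m β
  have hex3 : ∃ t : ℕ, ∃ β : Fin n →₀ ℕ,
      wdeg w β = t ∧ deg β = m ∧ MvPowerSeries.coeff β hh ≠ 0 :=
    ⟨wdeg w β₀, β₀, rfl, hβ₀deg, hβ₀ne⟩
  obtain ⟨αs, hαwdeg, hαdeg, hαne⟩ := Nat.find_spec hex3
  have hamin : ∀ γ, deg γ = m → MvPowerSeries.coeff γ hh ≠ 0 →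
      wdeg w αs ≤ wdeg w γ := by
    intro γ h1 h2
    have h3 : Nat.find hex3 ≤ wdeg w γ := Nat.find_min' hex3 ⟨γ, rfl, h1, h2⟩
    omega
  have hDn1 : 1 ≤ (m+2)^n := Nat.one_le_pow _ _ (by omega)
  have hQD : (m+2)^(n+1) = (m+2)^n * (m+2) := pow_succ (m+2) n
  have hQkey : (m+2)^n*m + 1 ≤ (m+2)^(n+1) := by
    have hr2 : (m+2)^n*m + (m+2)^n*2 = (m+2)^n*(m+2) := by ring
    calc (m+2)^n*m + 1 ≤ (m+2)^n*m + (m+2)^n*2 := by omega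
    _ = (m+2)^n*(m+2) := hr2
    _ = (m+2)^(n+1) := hQD.symm
  have haub : wdeg w αs ≤ (m+2)^(n+1)*m + (m+2)^n*m := by
    have h5 := hwle αs
    rw [hαdeg] at h5
    exact h5
  have hsep : ∀ γ, MvPowerSeries.coeff γ hh ≠ 0 → γ ≠ αs →
      wdeg w αs + 1 ≤ wdeg w γ := by
    intro γ hγ hneq
    have hdm := hmmin γ hγ
    rcases Nat.eq_or_lt_of_le hdm with hdeq | hdlt
    · have h1 : wdeg w αs ≤ wdeg w γ := hamin γ hdeq.symm hγ
      rcases Nat.eq_or_lt_of_le h1 with h2 | h2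
      · exfalso
        exact hneq (wdeg_wt_inj m hdeq.symm hαdeg h2.symm)
      · omega
    · have h1 : (m+2)^(n+1) * deg γ ≤ wdeg w γ := hwge γ
      have h2 : (m+2)^(n+1) * (m+1) ≤ (m+2)^(n+1) * deg γ :=
        Nat.mul_le_mul_left _ (by omega)
      have h4 : (m+2)^(n+1)*(m+1) = (m+2)^(n+1)*m + (m+2)^(n+1) := by ring
      omega
  -- Step 6: truncation
  set gN : MvPowerSeries (Fin n) ℂ
    := fun β => if deg β ≤ m+1 then MvPowerSeries.coeff β g else 0 with hgNdef
  have hgNcoeff : ∀ β, MvPowerSeries.coeff β gN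
      = if deg β ≤ m+1 then MvPowerSeries.coeff β g else 0 := fun β => rfl
  set r : MvPowerSeries (Fin n) ℂ := g - gN with hrdef
  have hgr : g = gN + r := by rw [hrdef]; ring
  have hr0 : ∀ β, deg β ≤ m+1 → MvPowerSeries.coeff β r = 0 := by
    intro β hβ
    rw [hrdef, map_sub, hgNcoeff, if_pos hβ, sub_self]
  have hνa : wdeg w αs + 1 ≤ (m+2)^(n+1) * (m+2) := by
    have hν2 : (m+2)^(n+1)*(m+2) = (m+2)^(n+1)*m + (m+2)^(n+1)*2 := by ring
    omega
  have hVr : Vw w ((m+2)^(n+1) * (m+2)) r := by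
    intro β hβ
    apply hr0
    have h1 : (m+2)^(n+1) * deg β ≤ wdeg w β := hwge β
    have h2 : (m+2)^(n+1) * deg β < (m+2)^(n+1) * (m+2) := by omega
    have h3 := Nat.lt_of_mul_lt_mul_left h2
    omega
  have hVD : Vw (fun _ : Fin n => 1) (m+2) r := by
    intro β hβ
    apply hr0
    have h1 : wdeg (fun _ : Fin n => 1) β = deg β := wdeg_one β
    omega
  have hgNconv : IsConvergent gN := by
    have hsumpos : (0:ℝ) ≤ ∑ k ∈ Finset.range (m+2), nrm (fun _ : Fin n => 1) g k :=
      Finset.sum_nonneg fun k _ => nrm_nonneg _ _ _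
    refine ⟨1 + ∑ k ∈ Finset.range (m+2), nrm (fun _ : Fin n => 1) g k, by linarith,
      1, one_pos, ?_⟩
    intro β
    rw [one_pow, mul_one, hgNcoeff]
    split
    · rename_i hβ
      calc ‖MvPowerSeries.coeff β g‖
          ≤ nrm (fun _ : Fin n => 1) g (wdeg (fun _ : Fin n => 1) β) :=
            norm_coeff_le_nrm hw_one g β
      _ ≤ ∑ k ∈ Finset.range (m+2), nrm (fun _ : Fin n => 1) g k := by
          apply Finset.single_le_sum (f := fun k => nrm (fun _ : Fin n => 1) g k)
            (fun k _ => nrm_nonneg _ _ _)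
          rw [wdeg_one]
          exact Finset.mem_range.mpr (by omega)
      _ ≤ 1 + ∑ k ∈ Finset.range (m+2), nrm (fun _ : Fin n => 1) g k := by linarith
    · rw [norm_zero]
      linarith
  -- Step 7: Taylor coefficients
  set cs : ℕ → MvPowerSeries (Fin n) ℂ :=
    fun j => ∑ i ∈ Finset.range (e+1), ((e-i).choose j) • (b i * gN ^ (e-i-j)) with hcsdef
  have hcseval : ∀ j, cs j = ∑ i ∈ Finset.range (e+1), ((e-i).choose j) • (b i * gN ^ (e-i-j)) :=
    fun j => rfl
  have hTaylor : ∀ i ∈ Finset.range (e+1),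
      b i * g ^ (e-i)
        = ∑ j ∈ Finset.range (e+1), ((e-i).choose j) • (b i * gN ^ (e-i-j)) * r^j := by
    intro i hi
    have hie : i ≤ e := Nat.lt_succ_iff.mp (Finset.mem_range.mp hi)
    have hg' : g = r + gN := by rw [hgr]; ring
    rw [hg', add_pow, Finset.mul_sum]
    have hterm : ∀ j, b i * (r^j * gN^((e-i)-j) * ((e-i).choose j : MvPowerSeries (Fin n) ℂ))
        = ((e-i).choose j) • (b i * gN ^ (e-i-j)) * r^j := by
      intro j
      rw [nsmul_eq_mul]
      ring
    rw [Finset.sum_congr rfl (fun j _ => hterm j)]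
    apply Finset.sum_subset (Finset.range_subset_range.mpr (by omega : (e-i)+1 ≤ e+1))
    intro j hjt hjs
    have hj : (e-i) < j := by
      simp only [Finset.mem_range] at hjt hjs
      omega
    rw [Nat.choose_eq_zero_of_lt hj, zero_smul, zero_mul]
  have hcrel : ∑ j ∈ Finset.range (e+1), cs j * r ^ j = 0 := by
    have h1 : ∑ j ∈ Finset.range (e+1), cs j * r^j
        = ∑ j ∈ Finset.range (e+1), ∑ i ∈ Finset.range (e+1),
            ((e-i).choose j) • (b i * gN ^ (e-i-j)) * r^j := by
      apply Finset.sum_congr rfl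
      intro j _
      rw [hcseval, Finset.sum_mul]
    have h2 : ∑ i ∈ Finset.range (e+1), ∑ j ∈ Finset.range (e+1),
          ((e-i).choose j) • (b i * gN ^ (e-i-j)) * r^j
        = ∑ i ∈ Finset.range (e+1), b i * g^(e-i) :=
      (Finset.sum_congr rfl hTaylor).symm
    rw [h1, Finset.sum_comm, h2]
    exact hbrel
  -- Step 8: compare `cs 1` with `hh` in low degrees
  have hc1e : cs 1 = ∑ i ∈ Finset.range e, (e-i) • (b i * gN ^ (e-1-i)) := by
    rw [hcseval]
    rw [Finset.sum_range_succ]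
    have hz : ((e-e).choose 1) = 0 := by simp
    rw [hz, zero_smul, add_zero]
    apply Finset.sum_congr rfl
    intro i hi
    have hie : i < e := Finset.mem_range.mp hi
    have h1 : (e-i).choose 1 = e-i := Nat.choose_one_right _
    have h2 : e-i-1 = e-1-i := by omega
    rw [h1, h2]
  have hc1h : ∀ β, deg β ≤ m+1 →
      MvPowerSeries.coeff β (cs 1) = MvPowerSeries.coeff β hh := by
    have hVc1h : Vw (fun _ : Fin n => 1) (m+2) (cs 1 - hh) := by
      rw [hc1e, hhdef, ← Finset.sum_sub_distrib]
      apply Vw_sum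
      intro i _
      have hterm : (e-i) • (b i * gN ^ (e-1-i)) - (e-i) • (b i * g ^ (e-1-i))
          = (e-i) • (b i * (gN ^ (e-1-i) - g ^ (e-1-i))) := by
        rw [← smul_sub, ← mul_sub]
      rw [hterm]
      apply Vw_nsmul
      have hfac : gN ^ (e-1-i) - g ^ (e-1-i)
          = (∑ t ∈ Finset.range (e-1-i), gN^t * g^((e-1-i)-1-t)) * (gN - g) :=
        (geom_sum₂_mul gN g (e-1-i)).symm
      have hGg : Vw (fun _ : Fin n => 1) (m+2) (gN - g) := by
        have hng : gN - g = -r := by rw [hrdef]; ring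
        rw [hng]
        exact Vw_neg hVD
      have hprod := Vw_mul (Vw_any (fun _ : Fin n => 1) (b i))
        (show Vw (fun _ : Fin n => 1) (0 + (m+2)) (gN ^ (e-1-i) - g ^ (e-1-i)) by
          rw [hfac]
          exact Vw_mul (Vw_any _ _) hGg)
      simpa using hprod
    intro β hβ
    have h0 := hVc1h β (by rw [wdeg_one]; omega)
    rw [map_sub, sub_eq_zero] at h0
    exact h0
  set cc := MvPowerSeries.coeff αs hh with hccdef
  have hccne : cc ≠ 0 := hαne
  have hVc1 : Vw w (wdeg w αs + 1) (cs 1 - MvPowerSeries.monomial αs cc) := by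
    intro γ hγ
    have hγdeg : deg γ ≤ m := by
      have h1 : (m+2)^(n+1) * deg γ ≤ wdeg w γ := hwge γ
      have h4 : (m+2)^(n+1)*(m+1) = (m+2)^(n+1)*m + (m+2)^(n+1) := by ring
      have h2 : (m+2)^(n+1) * deg γ < (m+2)^(n+1) * (m+1) := by omega
      have h3 := Nat.lt_of_mul_lt_mul_left h2
      omega
    rw [map_sub, hc1h γ (by omega), MvPowerSeries.coeff_monomial]
    by_cases hγα : γ = αs
    · rw [if_pos hγα, hγα, hccdef, sub_self]
    · rw [if_neg hγα, sub_zero]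
      by_contra hnz
      have := hsep γ hnz hγα
      omega
  -- Step 9: convergence of the Taylor coefficients, uniform geometric bound
  have hcsconv : ∀ j, j ≤ e → IsConvergent (cs j) := by
    intro j _
    rw [hcseval]
    apply conv_sum
    intro i hi
    exact conv_nsmul _ (conv_mul (hbconv i (Nat.lt_succ_iff.mp (Finset.mem_range.mp hi)))
      (conv_pow hgNconv _))
  obtain ⟨M, ρ, hM, hρ, hcb⟩ := common_geom hw e cs hcsconv
  -- Step 10: the core analytic lemma
  have hrconv : IsConvergent r :=
    core hw he1 cs r αs cc hccne hνa hcrel hVr hVc1 M ρ hM hρ hcb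
  rw [hgr]
  exact conv_add hgNconv hrconv
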